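/- Let n ≥ 1. There exists a constant C > 0 such that every continuous function f in H^{1,∞}_fin(ℝ^n) admits a finite decomposition f = ∑_{j=1}^N λ_j a_j in which each a_j is a CONTINUOUS (1,∞)-atom and ∑_{j=1}^N |λ_j| ≤ C‖f‖_{H¹(ℝ^n)}. -/

import Mathlib

open MeasureTheory Metric Filter

noncomputable section

/-- Euclidean space `ℝⁿ`. -/
abbrev E (n : ℕ) := EuclideanSpace ℝ (Fin n)

/-- A `(1,∞)`-atom on `ℝⁿ`: a bounded measurable function supported in a closed ball `B`,
with integral zero and `‖a‖_∞ ≤ |B|⁻¹`. -/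
def IsInftyAtom (n : ℕ) (a : E n → ℝ) : Prop :=
  ∃ (x : E n) (r : ℝ), 0 < r ∧
    MemLp a ⊤ volume ∧
    (∀ y, y ∉ closedBall x r → a y = 0) ∧
    (∫ y, a y) = 0 ∧
    eLpNorm a ⊤ volume ≤ (volume (closedBall x r))⁻¹

/-- `f` is a finite linear combination of atoms (membership in `H^{1,∞}_fin`). -/
def MemH1Fin (n : ℕ) (Atom : (E n → ℝ) → Prop) (f : E n → ℝ) : Prop :=
  ∃ (N : ℕ) (l : Fin N → ℝ) (a : Fin N → E n → ℝ),
    (∀ j, Atom (a j)) ∧ ∀ x, f x = ∑ j, l j * a j x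

/-- The atomic Hardy norm `‖f‖_{H¹}`: the infimum of `∑_j |λ_j|` over all decompositions
`f = ∑_j λ_j a_j` into atoms, the series converging in `L¹`. -/
def H1Norm (n : ℕ) (Atom : (E n → ℝ) → Prop) (f : E n → ℝ) : ℝ :=
  sInf { c : ℝ | ∃ (l : ℕ → ℝ) (a : ℕ → E n → ℝ),
    (∀ j, Atom (a j)) ∧ Summable (fun j => |l j|) ∧
    Tendsto (fun N => eLpNorm (fun x => f x - ∑ j ∈ Finset.range N, l j * a j x) 1 volume)
      atTop (nhds 0) ∧
    (∑' j, |l j|) = c }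

open Convolution Pointwise

namespace FD

variable {n : ℕ}

lemma vol_cb (n : ℕ) (x : E n) (r : ℝ) :
    volume (closedBall x r) = volume (closedBall (0 : E n) r) :=
  Measure.addHaar_closedBall_center volume x r

lemma vol_cb_pos (x : E n) {r : ℝ} (hr : 0 < r) : 0 < volume (closedBall x r) :=
  measure_closedBall_pos volume x hr

lemma vol_cb_lt_top (x : E n) (r : ℝ) : volume (closedBall x r) < ⊤ :=
  measure_closedBall_lt_top

lemma vol_cb_toReal_pos (x : E n) {r : ℝ} (hr : 0 < r) :
    0 < (volume (closedBall x r)).toReal :=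
  ENNReal.toReal_pos (vol_cb_pos x hr).ne' (vol_cb_lt_top x r).ne

lemma vol_cb_toReal_eq (n : ℕ) (x : E n) {r : ℝ} (hr : 0 ≤ r) :
    (volume (closedBall x r)).toReal
      = r ^ n * (volume (closedBall (0 : E n) 1)).toReal := by
  rw [Measure.addHaar_closedBall' volume x hr, ENNReal.toReal_mul, ENNReal.toReal_ofReal
    (by positivity), finrank_euclideanSpace_fin]

/-- Volume ratio bound for closed balls. -/
lemma vol_cb_ratio (x x' : E n) {s s' : ℝ} (hs : 0 < s) (hss : s ≤ s') :
    (volume (closedBall x' s')).toReal ≤ (s' / s) ^ n * (volume (closedBall x s)).toReal := by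
  rw [vol_cb_toReal_eq n x' (by linarith), vol_cb_toReal_eq n x hs.le]
  rw [div_pow, ← mul_assoc]
  have h : s' ^ n / s ^ n * s ^ n = s' ^ n := by field_simp
  rw [h]

lemma integrable_of_ball {g : E n → ℝ} (x : E n) (r : ℝ)
    (hm : AEStronglyMeasurable g volume)
    (hsupp : ∀ y ∉ closedBall x r, g y = 0) {M : ℝ} (hM : ∀ y, |g y| ≤ M) :
    Integrable g volume := by
  refine ⟨hm, ?_⟩
  have hb : ∀ᵐ y ∂(volume : Measure (E n)), (‖g y‖₊ : ENNReal) ≤ ENNReal.ofReal M := by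
    filter_upwards with y
    rw [← enorm_eq_nnnorm, ← ofReal_norm]
    exact ENNReal.ofReal_le_ofReal ((Real.norm_eq_abs _ ▸ hM y))
  have h1 : ∫⁻ y, (‖g y‖₊ : ENNReal) ∂volume = ∫⁻ y in closedBall x r, ‖g y‖₊ ∂volume := by
    rw [← lintegral_indicator measurableSet_closedBall]
    congr 1; funext y
    by_cases h : y ∈ closedBall x r <;> simp [Set.indicator, h, hsupp y]
  have h2 : ∫⁻ y in closedBall x r, (‖g y‖₊ : ENNReal) ∂volume
      ≤ ENNReal.ofReal M * volume (closedBall x r) := by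
    calc ∫⁻ y in closedBall x r, (‖g y‖₊ : ENNReal) ∂volume
        ≤ ∫⁻ _ in closedBall x r, ENNReal.ofReal M ∂volume :=
          setLIntegral_mono_ae (by fun_prop) (hb.mono fun y h _ => h)
      _ = ENNReal.ofReal M * volume (closedBall x r) := by simp [mul_comm]
  rw [HasFiniteIntegral]
  show ∫⁻ y, (‖g y‖₊ : ENNReal) ∂volume < ⊤
  rw [h1]
  exact lt_of_le_of_lt h2 (by
    exact ENNReal.mul_lt_top ENNReal.ofReal_lt_top (vol_cb_lt_top x r))

lemma integral_abs_le_of_ball {g : E n → ℝ} (x : E n) (r : ℝ)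
    (hm : AEStronglyMeasurable g volume)
    (hsupp : ∀ y ∉ closedBall x r, g y = 0) {M : ℝ} (hM : ∀ y, |g y| ≤ M) :
    ∫ y, |g y| ≤ M * (volume (closedBall x r)).toReal := by
  have hint : Integrable g volume := integrable_of_ball x r hm hsupp hM
  have habs : Integrable (fun y => |g y|) volume := hint.abs
  have : ∫ y, |g y| = ∫ y in closedBall x r, |g y| := by
    rw [← integral_indicator measurableSet_closedBall]
    congr 1; funext y
    by_cases h : y ∈ closedBall x r <;> simp [Set.indicator, h, hsupp y]
  rw [this]
  calc ∫ y in closedBall x r, |g y| ≤ ∫ _ in closedBall x r, M := by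
        apply setIntegral_mono_on (habs.restrict)
          (integrableOn_const (vol_cb_lt_top x r).ne) measurableSet_closedBall
        exact fun y _ => hM y
    _ = M * (volume (closedBall x r)).toReal := by
        simp [mul_comm, measureReal_def]
  
lemma isInftyAtom_zero (n : ℕ) : IsInftyAtom n (fun _ => (0 : ℝ)) := by
  refine ⟨0, 1, one_pos, ?_, fun y _ => rfl, by simp, ?_⟩
  · exact MemLp.zero'
  · rw [show (fun _ : E n => (0 : ℝ)) = 0 from rfl, eLpNorm_zero]
    exact zero_le

/-- Normalization: any continuous mean-zero function `g` supported in a closed ball with a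
pointwise bound `M` can be written as `c • a` for a continuous atom `a` with
`c ≤ M * vol(ball)`.  Moreover the atom inherits the support ball and the normalized
pointwise bound. -/
lemma exists_atom_factor {g : E n → ℝ} (x : E n) {r M : ℝ} (hr : 0 < r)
    (hg : Continuous g) (hsupp : ∀ y ∉ closedBall x r, g y = 0)
    (hint : (∫ y, g y) = 0) (hM : ∀ y, |g y| ≤ M) :
    ∃ (c : ℝ) (a : E n → ℝ), 0 ≤ c ∧ c ≤ M * (volume (closedBall x r)).toReal ∧
      IsInftyAtom n a ∧ Continuous a ∧ (∀ y ∉ closedBall x r, a y = 0) ∧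
      (∀ y, |a y| ≤ ((volume (closedBall x r)).toReal)⁻¹) ∧
      (∀ y, g y = c * a y) := by
  have hM0 : 0 ≤ M := le_trans (abs_nonneg _) (hM x)
  have hvol : 0 < (volume (closedBall x r)).toReal := vol_cb_toReal_pos x hr
  by_cases h0 : ∀ y, g y = 0
  · refine ⟨0, fun _ => 0, le_refl _, by positivity, isInftyAtom_zero n, continuous_const,
      fun _ _ => rfl, fun y => by simp [le_of_lt (inv_pos.mpr hvol)], fun y => by simp [h0 y]⟩
  · push_neg at h0
    obtain ⟨y₀, hy₀⟩ := h0
    have hMpos : 0 < M := lt_of_lt_of_le (abs_pos.mpr hy₀) (hM y₀)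
    set c : ℝ := M * (volume (closedBall x r)).toReal with hc
    have hcpos : 0 < c := by positivity
    refine ⟨c, fun y => g y / c, hcpos.le, le_refl _, ?_, hg.div_const c, ?_, ?_, ?_⟩
    · refine ⟨x, r, hr, ?_, ?_, ?_, ?_⟩
      · refine ⟨(hg.div_const c).aestronglyMeasurable, ?_⟩
        have : ∀ y, ‖g y / c‖ ≤ M / c := by
          intro y
          rw [norm_div, Real.norm_eq_abs, Real.norm_eq_abs, abs_of_pos hcpos]
          gcongr
          exact hM y
        calc eLpNorm (fun y => g y / c) ⊤ volume ≤ ENNReal.ofReal (M / c) := by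
              rw [eLpNorm_exponent_top]
              exact eLpNormEssSup_le_of_ae_bound (Eventually.of_forall this)
          _ < ⊤ := ENNReal.ofReal_lt_top
      · exact fun y hy => by simp [hsupp y hy]
      · rw [integral_div, hint, zero_div]
      · have hbd : ∀ y, ‖g y / c‖ ≤ ((volume (closedBall x r)).toReal)⁻¹ := by
          intro y
          rw [norm_div, Real.norm_eq_abs, Real.norm_eq_abs, abs_of_pos hcpos]
          rw [div_le_iff₀ hcpos, hc]
          have heq : ((volume (closedBall x r)).toReal)⁻¹ * (M * (volume (closedBall x r)).toReal)
              = M := by field_simp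
          rw [heq]; exact hM y
        calc eLpNorm (fun y => g y / c) ⊤ volume
            ≤ ENNReal.ofReal (((volume (closedBall x r)).toReal)⁻¹) := by
              rw [eLpNorm_exponent_top]
              exact eLpNormEssSup_le_of_ae_bound (Eventually.of_forall hbd)
          _ = (volume (closedBall x r))⁻¹ := by
              rw [ENNReal.ofReal_inv_of_pos hvol, ENNReal.ofReal_toReal (vol_cb_lt_top x r).ne]
    · exact fun y hy => by simp [hsupp y hy]
    · intro y
      rw [abs_div, abs_of_pos hcpos, div_le_iff₀ hcpos, hc]
      have heq : ((volume (closedBall x r)).toReal)⁻¹ * (M * (volume (closedBall x r)).toReal)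
          = M := by field_simp
      rw [heq]; exact hM y
    · intro y
      rw [mul_div_cancel₀ _ hcpos.ne']

end FD

namespace FD

variable {n : ℕ}

/-- The defining set of `H1Norm`. -/
def H1Set (n : ℕ) (f : E n → ℝ) : Set ℝ :=
  { c : ℝ | ∃ (l : ℕ → ℝ) (a : ℕ → E n → ℝ),
    (∀ j, IsInftyAtom n (a j)) ∧ Summable (fun j => |l j|) ∧
    Tendsto (fun N => eLpNorm (fun x => f x - ∑ j ∈ Finset.range N, l j * a j x) 1 volume)
      atTop (nhds 0) ∧
    (∑' j, |l j|) = c }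

lemma h1norm_eq (f : E n → ℝ) : H1Norm n (IsInftyAtom n) f = sInf (H1Set n f) := rfl

lemma h1set_nonneg {f : E n → ℝ} {c : ℝ} (hc : c ∈ H1Set n f) : 0 ≤ c := by
  obtain ⟨l, a, -, -, -, rfl⟩ := hc
  exact tsum_nonneg fun j => abs_nonneg _

/-- Atoms are integrable with `L¹` norm at most 1. -/
lemma atom_int {a : E n → ℝ} (ha : IsInftyAtom n a) :
    Integrable a volume ∧ eLpNorm a 1 volume ≤ 1 := by
  obtain ⟨x, r, hr, hmem, hsupp, -, hbound⟩ := ha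
  have hmeas : AEStronglyMeasurable a volume := hmem.aestronglyMeasurable
  have hae : ∀ᵐ y ∂(volume : Measure (E n)), (‖a y‖₊ : ENNReal) ≤ (volume (closedBall x r))⁻¹ :=
    (ae_le_eLpNormEssSup (f := a) (μ := volume)).mono fun y hy =>
      le_trans hy (by rw [← eLpNorm_exponent_top]; exact hbound)
  have h1 : ∫⁻ y, (‖a y‖₊ : ENNReal) ∂volume = ∫⁻ y in closedBall x r, ‖a y‖₊ ∂volume := by
    rw [← lintegral_indicator measurableSet_closedBall]
    congr 1; funext y
    by_cases h : y ∈ closedBall x r <;> simp [Set.indicator, h, hsupp y]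
  have h2 : ∫⁻ y, (‖a y‖₊ : ENNReal) ∂volume ≤ 1 := by
    rw [h1]
    calc ∫⁻ y in closedBall x r, (‖a y‖₊ : ENNReal) ∂volume
        ≤ ∫⁻ _ in closedBall x r, (volume (closedBall x r))⁻¹ ∂volume :=
          setLIntegral_mono_ae (by fun_prop) (hae.mono fun y h _ => h)
      _ = (volume (closedBall x r))⁻¹ * volume (closedBall x r) := by simp [mul_comm]
      _ = 1 := ENNReal.inv_mul_cancel (vol_cb_pos x hr).ne' (vol_cb_lt_top x r).ne
  constructor
  · refine ⟨hmeas, ?_⟩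
    rw [HasFiniteIntegral]
    exact lt_of_le_of_lt h2 ENNReal.one_lt_top
  · rw [eLpNorm_one_eq_lintegral_enorm]
    exact h2

lemma h1set_nonempty {f : E n → ℝ} (hf : MemH1Fin n (IsInftyAtom n) f) :
    (H1Set n f).Nonempty := by
  obtain ⟨N, l, a, hatom, hsum⟩ := hf
  classical
  refine ⟨∑ j ∈ Finset.range N, |if h : j < N then l ⟨j, h⟩ else 0|,
    fun j => if h : j < N then l ⟨j, h⟩ else 0,
    fun j => if h : j < N then a ⟨j, h⟩ else (fun _ => 0), ?_, ?_, ?_, ?_⟩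
  · intro j
    by_cases h : j < N
    · simpa [h] using hatom ⟨j, h⟩
    · simpa [h] using isInftyAtom_zero n
  · apply summable_of_ne_finset_zero (s := Finset.range N)
    intro j hj
    rw [Finset.mem_range] at hj
    simp [dif_neg hj]
  · apply tendsto_atTop_of_eventually_const (i₀ := N)
    intro N' hN'
    have hzero : (fun x => f x - ∑ j ∈ Finset.range N', (if h : j < N then l ⟨j, h⟩ else 0) *
        (if h : j < N then a ⟨j, h⟩ else (fun _ => 0)) x) = (fun _ => (0 : ℝ)) := by
      funext x
      have h1 : ∑ j ∈ Finset.range N', (if h : j < N then l ⟨j, h⟩ else 0) *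
          (if h : j < N then a ⟨j, h⟩ else (fun _ => 0)) x
          = ∑ j ∈ Finset.range N, (if h : j < N then l ⟨j, h⟩ else 0) *
          (if h : j < N then a ⟨j, h⟩ else (fun _ => 0)) x := by
        apply (Finset.sum_subset (Finset.range_subset_range.mpr hN') ?_).symm
        intro j _ hj
        rw [Finset.mem_range] at hj
        simp [dif_neg hj]
      rw [h1]
      have h2 : ∑ j ∈ Finset.range N, (if h : j < N then l ⟨j, h⟩ else 0) *
          (if h : j < N then a ⟨j, h⟩ else (fun _ => 0)) x = ∑ j : Fin N, l j * a j x := by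
        rw [← Fin.sum_univ_eq_sum_range (fun j => (if h : j < N then l ⟨j, h⟩ else 0) *
          (if h : j < N then a ⟨j, h⟩ else (fun _ => 0)) x)]
        apply Finset.sum_congr rfl
        intro i _
        simp [i.isLt]
      rw [h2, ← hsum x, sub_self]
    rw [hzero]
    rw [show (fun _ : E n => (0 : ℝ)) = 0 from rfl, eLpNorm_zero]
  · rw [tsum_eq_sum (s := Finset.range N)]
    intro j hj
    rw [Finset.mem_range] at hj
    simp [dif_neg hj]

lemma h1norm_nonneg (f : E n → ℝ) : 0 ≤ H1Norm n (IsInftyAtom n) f :=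
  Real.sInf_nonneg fun _ hc => h1set_nonneg hc

lemma exists_near_decomposition {f : E n → ℝ} (hf : MemH1Fin n (IsInftyAtom n) f)
    {b : ℝ} (hb : H1Norm n (IsInftyAtom n) f < b) :
    ∃ (l : ℕ → ℝ) (a : ℕ → E n → ℝ),
      (∀ j, IsInftyAtom n (a j)) ∧ Summable (fun j => |l j|) ∧
      Tendsto (fun N => eLpNorm (fun x => f x - ∑ j ∈ Finset.range N, l j * a j x) 1 volume)
        atTop (nhds 0) ∧ (∑' j, |l j|) < b := by
  obtain ⟨c, hc, hcb⟩ := exists_lt_of_csInf_lt (h1set_nonempty hf) hb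
  obtain ⟨l, a, h1, h2, h3, rfl⟩ := hc
  exact ⟨l, a, h1, h2, h3, hcb⟩

/-- `L¹`-lower bound for elements of the defining set. -/
lemma eLpNorm_le_of_mem_h1set {f : E n → ℝ} (hfm : AEStronglyMeasurable f volume)
    {c : ℝ} (hc : c ∈ H1Set n f) : eLpNorm f 1 volume ≤ ENNReal.ofReal c := by
  obtain ⟨l, a, hatom, hsum, htend, rfl⟩ := hc
  have key : ∀ N : ℕ, eLpNorm f 1 volume ≤
      eLpNorm (fun x => f x - ∑ j ∈ Finset.range N, l j * a j x) 1 volume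
        + ENNReal.ofReal (∑' j, |l j|) := by
    intro N
    set S : E n → ℝ := fun x => ∑ j ∈ Finset.range N, l j * a j x with hSdef
    have hSm : AEStronglyMeasurable S volume := by
      apply Finset.aestronglyMeasurable_fun_sum
      intro j _
      exact (aestronglyMeasurable_const.mul (atom_int (hatom j)).1.1)
    have htri : eLpNorm f 1 volume ≤
        eLpNorm (fun x => f x - S x) 1 volume + eLpNorm S 1 volume := by
      have hfeq : f = fun x => (f x - S x) + S x := by funext x; ring
      calc eLpNorm f 1 volume = eLpNorm (fun x => (f x - S x) + S x) 1 volume := by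
            rw [← hfeq]
        _ ≤ _ := eLpNorm_add_le (hfm.sub hSm) hSm le_rfl
    have hsumbd : eLpNorm S 1 volume ≤ ENNReal.ofReal (∑' j, |l j|) := by
      have hsum_le : eLpNorm S 1 volume
          ≤ ∑ j ∈ Finset.range N, eLpNorm (l j • a j) 1 volume := by
        have hS2 : S = ∑ j ∈ Finset.range N, l j • a j := by
          funext x
          rw [hSdef]
          simp [Finset.sum_apply]
        rw [hS2]
        apply eLpNorm_sum_le (fun j _ =>
          (aestronglyMeasurable_const.mul (atom_int (hatom j)).1.1)) le_rfl
      calc eLpNorm S 1 volume ≤ ∑ j ∈ Finset.range N, eLpNorm (l j • a j) 1 volume := hsum_le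
        _ ≤ ∑ j ∈ Finset.range N, ENNReal.ofReal |l j| := by
            apply Finset.sum_le_sum
            intro j _
            rw [eLpNorm_const_smul]
            calc (‖l j‖₊ : ENNReal) * eLpNorm (a j) 1 volume
                ≤ (‖l j‖₊ : ENNReal) * 1 := by
                  gcongr
                  exact (atom_int (hatom j)).2
              _ = ENNReal.ofReal |l j| := by
                  rw [mul_one, ← enorm_eq_nnnorm, ← ofReal_norm, Real.norm_eq_abs]
        _ = ENNReal.ofReal (∑ j ∈ Finset.range N, |l j|) := by
            rw [ENNReal.ofReal_sum_of_nonneg fun j _ => abs_nonneg _]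
        _ ≤ ENNReal.ofReal (∑' j, |l j|) := by
            apply ENNReal.ofReal_le_ofReal
            exact Summable.sum_le_tsum _ (fun j _ => abs_nonneg _) hsum
    exact le_trans htri (by gcongr)
  have hlim : Tendsto (fun N => eLpNorm (fun x => f x - ∑ j ∈ Finset.range N, l j * a j x) 1 volume
      + ENNReal.ofReal (∑' j, |l j|)) atTop (nhds (0 + ENNReal.ofReal (∑' j, |l j|))) :=
    htend.add tendsto_const_nhds
  rw [zero_add] at hlim
  exact ge_of_tendsto hlim (Eventually.of_forall key)

lemma l1_le_h1norm {f : E n → ℝ} (hfm : AEStronglyMeasurable f volume)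
    (hfi : Integrable f volume) (hf : MemH1Fin n (IsInftyAtom n) f) :
    (eLpNorm f 1 volume).toReal ≤ H1Norm n (IsInftyAtom n) f := by
  rw [h1norm_eq]
  apply le_csInf (h1set_nonempty hf)
  intro c hc
  have h1 := eLpNorm_le_of_mem_h1set hfm hc
  have h2 : eLpNorm f 1 volume ≠ ⊤ := (memLp_one_iff_integrable.mpr hfi).eLpNorm_ne_top
  calc (eLpNorm f 1 volume).toReal ≤ (ENNReal.ofReal c).toReal :=
        ENNReal.toReal_mono ENNReal.ofReal_ne_top h1
    _ = c := ENNReal.toReal_ofReal (h1set_nonneg hc)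

/-- A continuous function that is nonzero somewhere has positive `L¹` norm, provided
it is integrable. -/
lemma h1norm_pos {f : E n → ℝ} (hf : Continuous f) (hfi : Integrable f volume)
    (hmem : MemH1Fin n (IsInftyAtom n) f) {x₀ : E n} (hx₀ : f x₀ ≠ 0) :
    0 < H1Norm n (IsInftyAtom n) f := by
  have habs : Continuous fun y => |f y| := hf.abs
  have hev : ∀ᶠ y in nhds x₀, |f x₀| / 2 < |f y| :=
    habs.continuousAt.eventually_const_lt (by simp [abs_pos.mpr hx₀, half_lt_self])
  obtain ⟨δ, hδ, hball⟩ := Metric.eventually_nhds_iff_ball.mp hev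
  have hpos : 0 < ∫ y, |f y| := by
    have hsub : ∫ y in closedBall x₀ (δ/2), |f y| ≤ ∫ y, |f y| := by
      apply setIntegral_le_integral hfi.abs
      filter_upwards with y using abs_nonneg _
    have hlow : (|f x₀| / 2) * (volume (closedBall x₀ (δ/2))).toReal
        ≤ ∫ y in closedBall x₀ (δ/2), |f y| := by
      have : ∫ _ in closedBall x₀ (δ/2), (|f x₀| / 2) ≤ ∫ y in closedBall x₀ (δ/2), |f y| := by
        apply setIntegral_mono_on (integrableOn_const (vol_cb_lt_top x₀ (δ/2)).ne)
          (hfi.abs.restrict) measurableSet_closedBall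
        intro y hy
        have : y ∈ ball x₀ δ := lt_of_le_of_lt hy.out (by linarith)
        exact (hball y this).le
      simpa [mul_comm, measureReal_def] using this
    have hv : 0 < (volume (closedBall x₀ (δ/2))).toReal := vol_cb_toReal_pos x₀ (by linarith)
    nlinarith [abs_pos.mpr hx₀]
  have heq : (eLpNorm f 1 volume).toReal = ∫ y, |f y| := by
    rw [eLpNorm_one_eq_lintegral_enorm, ← integral_norm_eq_lintegral_enorm hfi.1]
    simp [Real.norm_eq_abs]
  have := l1_le_h1norm hf.aestronglyMeasurable hfi hmem
  rw [heq] at this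
  linarith

end FD

namespace FD

variable {n : ℕ}

/-- Tent function at center `z`, radius `s`. -/
def tent (z : E n) (s : ℝ) : E n → ℝ := fun y => max 0 (1 - ‖y - z‖ / s)

/-- Normalized tent: continuous bump with integral one supported in `closedBall z s`. -/
noncomputable def tn (z : E n) (s : ℝ) : E n → ℝ :=
  fun y => tent z s y / ∫ w, tent z s w

lemma tent_cont (z : E n) (s : ℝ) : Continuous (tent z s) := by
  apply continuous_const.max
  exact continuous_const.sub ((continuous_id.sub continuous_const).norm.div_const s)

lemma tent_nonneg (z : E n) (s : ℝ) (y : E n) : 0 ≤ tent z s y := le_max_left _ _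

lemma tent_le_one (z : E n) {s : ℝ} (hs : 0 < s) (y : E n) : tent z s y ≤ 1 := by
  apply max_le (by norm_num)
  have : 0 ≤ ‖y - z‖ / s := by positivity
  linarith

lemma tent_abs_le_one (z : E n) {s : ℝ} (hs : 0 < s) (y : E n) : |tent z s y| ≤ 1 := by
  rw [abs_of_nonneg (tent_nonneg z s y)]; exact tent_le_one z hs y

lemma tent_supp (z : E n) {s : ℝ} (hs : 0 < s) :
    ∀ y ∉ closedBall z s, tent z s y = 0 := by
  intro y hy
  rw [mem_closedBall, dist_eq_norm] at hy
  push_neg at hy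
  apply max_eq_left
  rw [sub_nonpos, le_div_iff₀ hs, one_mul]
  exact hy.le

lemma tent_integrable (z : E n) {s : ℝ} (hs : 0 < s) : Integrable (tent z s) volume :=
  integrable_of_ball z s (tent_cont z s).aestronglyMeasurable (tent_supp z hs)
    (tent_abs_le_one z hs)

lemma tent_integral_lb (z : E n) {s : ℝ} (hs : 0 < s) :
    (1/2) * (volume (closedBall z (s/2))).toReal ≤ ∫ y, tent z s y := by
  have h1 : ∫ y in closedBall z (s/2), tent z s y ≤ ∫ y, tent z s y := by
    apply setIntegral_le_integral (tent_integrable z hs)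
    filter_upwards with y using tent_nonneg z s y
  have h2 : (1/2) * (volume (closedBall z (s/2))).toReal
      ≤ ∫ y in closedBall z (s/2), tent z s y := by
    have : ∫ _ in closedBall z (s/2), (1/2 : ℝ) ≤ ∫ y in closedBall z (s/2), tent z s y := by
      apply setIntegral_mono_on (integrableOn_const (vol_cb_lt_top z (s/2)).ne)
        ((tent_integrable z hs).restrict) measurableSet_closedBall
      intro y hy
      rw [mem_closedBall, dist_eq_norm] at hy
      have hds : ‖y - z‖ / s ≤ 1/2 := by
        rw [div_le_iff₀ hs]; linarith
      calc (1/2:ℝ) ≤ 1 - ‖y - z‖ / s := by linarith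
        _ ≤ tent z s y := le_max_right _ _
    simpa [mul_comm, measureReal_def] using this
  linarith

lemma tent_integral_pos (z : E n) {s : ℝ} (hs : 0 < s) : 0 < ∫ y, tent z s y := by
  have := tent_integral_lb z hs
  have hv : 0 < (volume (closedBall z (s/2))).toReal := vol_cb_toReal_pos z (by linarith)
  linarith

lemma tn_cont (z : E n) (s : ℝ) : Continuous (tn z s) :=
  (tent_cont z s).div_const _

lemma tn_nonneg (z : E n) {s : ℝ} (hs : 0 < s) (y : E n) : 0 ≤ tn z s y :=
  div_nonneg (tent_nonneg z s y) (tent_integral_pos z hs).le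

lemma tn_supp (z : E n) {s : ℝ} (hs : 0 < s) : ∀ y ∉ closedBall z s, tn z s y = 0 := by
  intro y hy
  simp only [tn, tent_supp z hs y hy, zero_div]

lemma tn_integral (z : E n) {s : ℝ} (hs : 0 < s) : (∫ y, tn z s y) = 1 := by
  simp only [tn]
  rw [integral_div, div_self (tent_integral_pos z hs).ne']

lemma tn_bound (z : E n) {s : ℝ} (hs : 0 < s) (y : E n) :
    |tn z s y| ≤ 2 * 2 ^ n / (volume (closedBall z s)).toReal := by
  have hI := tent_integral_pos z hs
  have hlb := tent_integral_lb z hs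
  have hv2 : 0 < (volume (closedBall z (s/2))).toReal := vol_cb_toReal_pos z (by linarith)
  have hv : 0 < (volume (closedBall z s)).toReal := vol_cb_toReal_pos z hs
  have hratio : (volume (closedBall z s)).toReal
      ≤ 2 ^ n * (volume (closedBall z (s/2))).toReal := by
    have := vol_cb_ratio (n := n) z z (s := s/2) (s' := s) (by linarith) (by linarith)
    have h2 : (s / (s/2)) = 2 := by field_simp
    rw [h2] at this
    exact this
  simp only [tn]
  rw [abs_div, abs_of_pos hI]
  rw [div_le_div_iff₀ hI hv]
  calc |tent z s y| * (volume (closedBall z s)).toReal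
      ≤ 1 * (2 ^ n * (volume (closedBall z (s/2))).toReal) := by
        apply mul_le_mul (tent_abs_le_one z hs y) hratio hv.le (by norm_num)
    _ = 2 * 2 ^ n * ((1/2) * (volume (closedBall z (s/2))).toReal) := by ring
    _ ≤ 2 * 2 ^ n * ∫ w, tent z s w := by
        apply mul_le_mul_of_nonneg_left hlb (by positivity)

lemma tn_integrable (z : E n) {s : ℝ} (hs : 0 < s) : Integrable (tn z s) volume :=
  (tent_integrable z hs).div_const _

/-- One link of the dipole chain: the difference of two concentric normalized tents is a
multiple of a continuous atom, with controlled coefficient. -/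
lemma tn_link (z : E n) {s s' : ℝ} (hs : 0 < s) (hss : s ≤ s') :
    ∃ (c : ℝ) (a : E n → ℝ), 0 ≤ c ∧ c ≤ 4 * 2 ^ n * (s'/s) ^ n ∧ IsInftyAtom n a ∧
      Continuous a ∧ ∀ y, tn z s y - tn z s' y = c * a y := by
  have hs' : 0 < s' := lt_of_lt_of_le hs hss
  have hv : 0 < (volume (closedBall z s)).toReal := vol_cb_toReal_pos z hs
  have hv' : 0 < (volume (closedBall z s')).toReal := vol_cb_toReal_pos z hs'
  set M : ℝ := 4 * 2 ^ n / (volume (closedBall z s)).toReal with hM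
  have hbd : ∀ y, |tn z s y - tn z s' y| ≤ M := by
    intro y
    have h1 := tn_bound z hs y
    have h2 := tn_bound z hs' y
    have hmono : (volume (closedBall z s)).toReal ≤ (volume (closedBall z s')).toReal :=
      ENNReal.toReal_mono (vol_cb_lt_top z s').ne
        (measure_mono (closedBall_subset_closedBall hss))
    have h2' : |tn z s' y| ≤ 2 * 2 ^ n / (volume (closedBall z s)).toReal :=
      le_trans h2 (div_le_div_of_nonneg_left (by positivity) (vol_cb_toReal_pos z hs) hmono)
    calc |tn z s y - tn z s' y| ≤ |tn z s y| + |tn z s' y| := abs_sub _ _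
      _ ≤ 2 * 2 ^ n / (volume (closedBall z s)).toReal
          + 2 * 2 ^ n / (volume (closedBall z s)).toReal := add_le_add h1 h2'
      _ = M := by rw [hM]; ring
  have hsupp : ∀ y ∉ closedBall z s', tn z s y - tn z s' y = 0 := by
    intro y hy
    have hy1 : y ∉ closedBall z s := fun h => hy (closedBall_subset_closedBall hss h)
    rw [tn_supp z hs y hy1, tn_supp z hs' y hy, sub_zero]
  have hint : (∫ y, tn z s y - tn z s' y) = 0 := by
    rw [integral_sub (tn_integrable z hs) (tn_integrable z hs'),
      tn_integral z hs, tn_integral z hs', sub_self]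
  obtain ⟨c, a, hc0, hcle, hatom, hcont, -, -, heq⟩ :=
    exists_atom_factor (g := fun y => tn z s y - tn z s' y) z hs'
      ((tn_cont z s).sub (tn_cont z s')) hsupp hint hbd
  refine ⟨c, a, hc0, ?_, hatom, hcont, heq⟩
  calc c ≤ M * (volume (closedBall z s')).toReal := hcle
    _ ≤ (4 * 2 ^ n / (volume (closedBall z s)).toReal)
        * ((s'/s) ^ n * (volume (closedBall z s)).toReal) := by
        rw [← hM]
        apply mul_le_mul_of_nonneg_left (vol_cb_ratio z z hs hss) (by positivity)
    _ = 4 * 2 ^ n * (s'/s) ^ n := by field_simp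
  
/-- Top link: a normalized tent of radius comparable to `R` is matched directly with the
central tent `tn 0 (2R)`. -/
lemma tn_toplink {R : ℝ} (hR : 1 ≤ R) (z : E n) {s : ℝ} (hRs : R ≤ s) (hs2 : s ≤ 2*R)
    (hz : ‖z‖ ≤ 4*R) :
    ∃ (c : ℝ) (a : E n → ℝ), 0 ≤ c ∧ c ≤ 4 * 2 ^ n * 6 ^ n ∧ IsInftyAtom n a ∧
      Continuous a ∧ ∀ y, tn z s y - tn (0 : E n) (2*R) y = c * a y := by
  have hR0 : (0:ℝ) < R := by linarith
  have hs : 0 < s := by linarith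
  have h2R : (0:ℝ) < 2*R := by linarith
  have hv : 0 < (volume (closedBall z s)).toReal := vol_cb_toReal_pos z hs
  have hv2R : 0 < (volume (closedBall (0:E n) (2*R))).toReal := vol_cb_toReal_pos _ h2R
  set M : ℝ := 2 * 2 ^ n / (volume (closedBall z s)).toReal
      + 2 * 2 ^ n / (volume (closedBall (0:E n) (2*R))).toReal with hM
  have hbd : ∀ y, |tn z s y - tn (0:E n) (2*R) y| ≤ M := by
    intro y
    calc |tn z s y - tn (0:E n) (2*R) y| ≤ |tn z s y| + |tn (0:E n) (2*R) y| := abs_sub _ _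
      _ ≤ M := add_le_add (tn_bound z hs y) (tn_bound (0:E n) h2R y)
  have hsupp : ∀ y ∉ closedBall (0 : E n) (6*R), tn z s y - tn (0:E n) (2*R) y = 0 := by
    intro y hy
    rw [mem_closedBall, dist_zero_right] at hy
    push_neg at hy
    have hy1 : y ∉ closedBall z s := by
      rw [mem_closedBall, dist_eq_norm]
      intro h
      have h' : ‖y‖ ≤ ‖y - z‖ + ‖z‖ := by
        calc ‖y‖ = ‖(y - z) + z‖ := by rw [sub_add_cancel]
          _ ≤ ‖y - z‖ + ‖z‖ := norm_add_le _ _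
      nlinarith
    have hy2 : y ∉ closedBall (0:E n) (2*R) := by
      rw [mem_closedBall, dist_zero_right]
      intro h
      linarith
    rw [tn_supp z hs y hy1, tn_supp (0:E n) h2R y hy2, sub_zero]
  have hint : (∫ y, tn z s y - tn (0:E n) (2*R) y) = 0 := by
    rw [integral_sub (tn_integrable z hs) (tn_integrable (0:E n) h2R),
      tn_integral z hs, tn_integral (0:E n) h2R, sub_self]
  obtain ⟨c, a, hc0, hcle, hatom, hcont, -, -, heq⟩ :=
    exists_atom_factor (g := fun y => tn z s y - tn (0:E n) (2*R) y) (0 : E n)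
      (r := 6*R) (by linarith)
      ((tn_cont z s).sub (tn_cont (0:E n) (2*R))) hsupp hint hbd
  refine ⟨c, a, hc0, ?_, hatom, hcont, heq⟩
  have hr1 : (volume (closedBall (0:E n) (6*R))).toReal
      ≤ (6*R/s) ^ n * (volume (closedBall z s)).toReal := vol_cb_ratio z (0:E n) hs (by linarith)
  have hr2 : (volume (closedBall (0:E n) (6*R))).toReal
      ≤ 3 ^ n * (volume (closedBall (0:E n) (2*R))).toReal := by
    have := vol_cb_ratio (n := n) (0:E n) (0:E n) (s := 2*R) (s' := 6*R) h2R (by linarith)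
    have h3 : (6*R/(2*R)) = 3 := by field_simp; ring
    rw [h3] at this
    exact this
  have hr1' : (6*R/s) ^ n ≤ 6 ^ n := by
    apply pow_le_pow_left₀ (by positivity)
    rw [div_le_iff₀ hs]
    nlinarith
  calc c ≤ M * (volume (closedBall (0:E n) (6*R))).toReal := hcle
    _ = (2 * 2 ^ n / (volume (closedBall z s)).toReal)
          * (volume (closedBall (0:E n) (6*R))).toReal
        + (2 * 2 ^ n / (volume (closedBall (0:E n) (2*R))).toReal)
          * (volume (closedBall (0:E n) (6*R))).toReal := by rw [hM]; ring
    _ ≤ (2 * 2 ^ n / (volume (closedBall z s)).toReal)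
          * ((6*R/s) ^ n * (volume (closedBall z s)).toReal)
        + (2 * 2 ^ n / (volume (closedBall (0:E n) (2*R))).toReal)
          * (3 ^ n * (volume (closedBall (0:E n) (2*R))).toReal) := by
        apply add_le_add
        · exact mul_le_mul_of_nonneg_left hr1 (by positivity)
        · exact mul_le_mul_of_nonneg_left hr2 (by positivity)
    _ = 2 * 2 ^ n * (6*R/s) ^ n + 2 * 2 ^ n * 3 ^ n := by field_simp
    _ ≤ 2 * 2 ^ n * 6 ^ n + 2 * 2 ^ n * 6 ^ n := by
        apply add_le_add
        · exact mul_le_mul_of_nonneg_left hr1' (by positivity)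
        · apply mul_le_mul_of_nonneg_left _ (by positivity)
          apply pow_le_pow_left₀ (by norm_num) (by norm_num)
    _ = 4 * 2 ^ n * 6 ^ n := by ring

/-- The dipole chain lemma: any normalized tent inside `closedBall 0 (4R)` differs from the
central tent `tn 0 (2R)` by a finite combination of continuous atoms, with cost
`≤ K₀ (k+1)` where `2R ≤ s 2^k`. -/
lemma tn_chain {R : ℝ} (hR : 1 ≤ R) :
    ∀ (k : ℕ) (z : E n) (s : ℝ), 0 < s → s ≤ 2*R → ‖z‖ ≤ 4*R → 2*R ≤ s * 2^k →
    ∃ L : List (ℝ × (E n → ℝ)),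
      (∀ p ∈ L, IsInftyAtom n p.2 ∧ Continuous p.2) ∧
      ((L.map fun p => |p.1|).sum ≤ (4 * 2 ^ n * 6 ^ n) * (k+1)) ∧
      ∀ y, tn z s y - tn (0 : E n) (2*R) y = (L.map fun p => p.1 * p.2 y).sum := by
  have hK0 : (0:ℝ) ≤ 4 * 2 ^ n * 6 ^ n := by positivity
  intro k
  induction k with
  | zero =>
    intro z s hs hs2 hz hlow
    simp only [pow_zero, mul_one] at hlow
    have hRs : R ≤ s := by linarith
    obtain ⟨c, a, hc0, hcle, hatom, hcont, heq⟩ := tn_toplink hR z hRs hs2 hz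
    refine ⟨[(c, a)], ?_, ?_, ?_⟩
    · intro p hp
      rw [List.mem_singleton] at hp
      rw [hp]
      exact ⟨hatom, hcont⟩
    · simp only [List.map_cons, List.map_nil, List.sum_cons, List.sum_nil, add_zero]
      rw [abs_of_nonneg hc0]
      push_cast
      linarith
    · intro y
      simp only [List.map_cons, List.map_nil, List.sum_cons, List.sum_nil, add_zero]
      exact heq y
  | succ k ih =>
    intro z s hs hs2 hz hlow
    by_cases hRs : R ≤ s
    · obtain ⟨c, a, hc0, hcle, hatom, hcont, heq⟩ := tn_toplink hR z hRs hs2 hz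
      refine ⟨[(c, a)], ?_, ?_, ?_⟩
      · intro p hp
        rw [List.mem_singleton] at hp
        rw [hp]
        exact ⟨hatom, hcont⟩
      · simp only [List.map_cons, List.map_nil, List.sum_cons, List.sum_nil, add_zero]
        rw [abs_of_nonneg hc0]
        calc c ≤ 4 * 2 ^ n * 6 ^ n := hcle
          _ ≤ (4 * 2 ^ n * 6 ^ n) * (↑(k+1)+1) := by
              apply le_mul_of_one_le_right hK0
              push_cast
              linarith [Nat.cast_nonneg (α := ℝ) k]
      · intro y
        simp only [List.map_cons, List.map_nil, List.sum_cons, List.sum_nil, add_zero]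
        exact heq y
    · push_neg at hRs
      obtain ⟨c, a, hc0, hcle, hatom, hcont, heq⟩ := tn_link z hs (le_of_lt (by linarith : s < 2*s))
      have hc2 : c ≤ 4 * 2 ^ n * 6 ^ n := by
        have h2s : (2*s/s) ^ n = 2 ^ n := by
          congr 1
          field_simp
        rw [h2s] at hcle
        calc c ≤ 4 * 2 ^ n * 2 ^ n := hcle
          _ ≤ 4 * 2 ^ n * 6 ^ n := by
            apply mul_le_mul_of_nonneg_left _ (by positivity)
            apply pow_le_pow_left₀ (by norm_num) (by norm_num)
      obtain ⟨L, hLatom, hLcost, hLeq⟩ := ih z (2*s) (by linarith) (by linarith) hz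
        (by
          have : s * 2 ^ (k+1) = (2*s) * 2 ^ k := by ring
          linarith [hlow.trans_eq this])
      refine ⟨(c, a) :: L, ?_, ?_, ?_⟩
      · intro p hp
        rcases List.mem_cons.mp hp with h | h
        · rw [h]; exact ⟨hatom, hcont⟩
        · exact hLatom p h
      · simp only [List.map_cons, List.sum_cons]
        rw [abs_of_nonneg hc0]
        push_cast
        push_cast at hLcost
        linarith
      · intro y
        simp only [List.map_cons, List.sum_cons]
        rw [← hLeq y, ← heq y]
        ring

end FD

namespace FD

variable {n : ℕ}

/-- Lipschitz cutoff: `1` on `closedBall 0 R`, supported in `closedBall 0 (2R)`. -/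
def cutoff (R : ℝ) : E n → ℝ := fun y => max 0 (min 1 (2 - ‖y‖/R))

lemma cutoff_cont (R : ℝ) : Continuous (cutoff (n := n) R) := by
  apply continuous_const.max
  exact continuous_const.min (continuous_const.sub (continuous_norm.div_const R))

lemma cutoff_nonneg (R : ℝ) (y : E n) : 0 ≤ cutoff R y := le_max_left _ _

lemma cutoff_le_one (R : ℝ) (y : E n) : cutoff R y ≤ 1 :=
  max_le zero_le_one (min_le_left _ _)

lemma cutoff_abs_le_one (R : ℝ) (y : E n) : |cutoff R y| ≤ 1 := by
  rw [abs_of_nonneg (cutoff_nonneg R y)]; exact cutoff_le_one R y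

lemma cutoff_eq_one {R : ℝ} (hR : 0 < R) {y : E n} (hy : ‖y‖ ≤ R) : cutoff R y = 1 := by
  have h1 : (1:ℝ) ≤ 2 - ‖y‖/R := by
    have : ‖y‖/R ≤ 1 := by rw [div_le_one hR]; exact hy
    linarith
  rw [cutoff, min_eq_left h1, max_eq_right zero_le_one]

lemma cutoff_eq_zero {R : ℝ} (hR : 0 < R) {y : E n} (hy : 2*R < ‖y‖) : cutoff R y = 0 := by
  have h1 : 2 - ‖y‖/R < 0 := by
    rw [sub_neg, lt_div_iff₀ hR]
    linarith
  rw [cutoff, max_eq_left]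
  exact (min_le_right _ _).trans h1.le

lemma cutoff_supp {R : ℝ} (hR : 0 < R) :
    ∀ y ∉ closedBall (0 : E n) (2*R), cutoff R y = 0 := by
  intro y hy
  rw [mem_closedBall, dist_zero_right] at hy
  push_neg at hy
  exact cutoff_eq_zero hR hy

lemma cutoff_lip {R : ℝ} (hR : 0 < R) (y y' : E n) :
    |cutoff R y - cutoff R y'| ≤ ‖y - y'‖ / R := by
  have h1 : |cutoff R y - cutoff R y'|
      ≤ |min 1 (2 - ‖y‖/R) - min 1 (2 - ‖y'‖/R)| := by
    simp only [cutoff]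
    rw [max_comm 0 (min 1 (2 - ‖y‖/R)), max_comm 0 (min 1 (2 - ‖y'‖/R))]
    exact abs_max_sub_max_le_abs _ _ _
  have h2 : |min 1 (2 - ‖y‖/R) - min 1 (2 - ‖y'‖/R)|
      ≤ |(2 - ‖y‖/R) - (2 - ‖y'‖/R)| := by
    have := abs_min_sub_min_le_max (1:ℝ) (2 - ‖y‖/R) (1:ℝ) (2 - ‖y'‖/R)
    simpa using this
  have h3 : |(2 - ‖y‖/R) - (2 - ‖y'‖/R)| ≤ ‖y - y'‖ / R := by
    have heq : (2 - ‖y‖/R) - (2 - ‖y'‖/R) = (‖y'‖ - ‖y‖)/R := by ring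
    rw [heq, abs_div, abs_of_pos hR]
    gcongr
    calc |‖y'‖ - ‖y‖| ≤ ‖y' - y‖ := abs_norm_sub_norm_le _ _
      _ = ‖y - y'‖ := by rw [norm_sub_rev]
  linarith

/-- Helper: sum of a scaled list. -/
lemma list_scale_sum (L : List (ℝ × (E n → ℝ))) (t : ℝ) (y : E n) :
    ((L.map fun p => (t * p.1, p.2)).map fun p => p.1 * p.2 y).sum
      = t * (L.map fun p => p.1 * p.2 y).sum := by
  induction L with
  | nil => simp
  | cons p L ih =>
    rw [List.map_map] at ih
    simp only [List.map_cons, List.map_map, List.sum_cons]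
    rw [ih]; ring

lemma list_scale_cost (L : List (ℝ × (E n → ℝ))) (t : ℝ) :
    ((L.map fun p => (t * p.1, p.2)).map fun p => |p.1|).sum
      = |t| * (L.map fun p => |p.1|).sum := by
  induction L with
  | nil => simp
  | cons p L ih =>
    rw [List.map_map] at ih
    simp only [List.map_cons, List.map_map, List.sum_cons]
    rw [ih, abs_mul]; ring

/-- The `x log(1/x)` bound used to control the chain cost of small straddling atoms. -/
lemma xlogx_bound {x : ℝ} (hx : 0 < x) (hx1 : x ≤ 1) :
    x * (Real.logb 2 (2/x) + 2) ≤ 6 := by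
  have hlog2 : (0.6931471803 : ℝ) < Real.log 2 := Real.log_two_gt_d9
  have hsq : 0 < Real.sqrt x := Real.sqrt_pos.mpr hx
  have hsq1 : Real.sqrt x ≤ 1 := by
    rw [show (1:ℝ) = Real.sqrt 1 by rw [Real.sqrt_one]]
    exact Real.sqrt_le_sqrt hx1
  have hxlog : x * Real.log (1/x) ≤ 2 := by
    have h1 : Real.log (1/x) = 2 * Real.log (1/Real.sqrt x) := by
      rw [show (2:ℝ) * Real.log (1/Real.sqrt x) = ((2:ℕ):ℝ) * Real.log (1/Real.sqrt x) by
        norm_num, ← Real.log_pow]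
      congr 1
      rw [div_pow, one_pow, Real.sq_sqrt hx.le]
    have h2 : Real.log (1/Real.sqrt x) ≤ 1/Real.sqrt x :=
      le_trans (Real.log_le_sub_one_of_pos (by positivity)) (by linarith [hsq.le])
    have h3 : x * Real.log (1/x) ≤ 2 * (x / Real.sqrt x) := by
      rw [h1]
      calc x * (2 * Real.log (1/Real.sqrt x)) = 2 * (x * Real.log (1/Real.sqrt x)) := by ring
        _ ≤ 2 * (x * (1/Real.sqrt x)) := by nlinarith
        _ = 2 * (x / Real.sqrt x) := by ring
    rw [Real.div_sqrt] at h3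
    calc x * Real.log (1/x) ≤ 2 * Real.sqrt x := h3
      _ ≤ 2 := by linarith
  have hlogb : Real.logb 2 (2/x) = (Real.log 2 + Real.log (1/x)) / Real.log 2 := by
    rw [Real.logb, show (2:ℝ)/x = 2 * (1/x) by ring, Real.log_mul (by norm_num) (by positivity)]
  rw [hlogb]
  have hL2 : (0:ℝ) < Real.log 2 := by linarith
  have hxl : 0 ≤ Real.log (1/x) := Real.log_nonneg (by rw [le_div_iff₀ hx]; linarith)
  have key : x * ((Real.log 2 + Real.log (1/x)) / Real.log 2 + 2) * Real.log 2
      = x * Real.log 2 + x * Real.log (1/x) + 2*x*Real.log 2 := by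
    field_simp
  have hfin : x * ((Real.log 2 + Real.log (1/x)) / Real.log 2 + 2) * Real.log 2
      ≤ 6 * Real.log 2 := by
    rw [key]
    nlinarith
  exact le_of_mul_le_mul_right hfin hL2

end FD

namespace FD

variable {n : ℕ}

/-- Cost constant of the surgery. -/
def K2 (n : ℕ) : ℝ := 2 + 5*2^n + 24*(2^n*6^n)

lemma one_le_two_pow : (1:ℝ) ≤ 2^n := one_le_pow₀ (by norm_num)
lemma one_le_six_pow : (1:ℝ) ≤ 6^n := one_le_pow₀ (by norm_num)

lemma K2_pos : (0:ℝ) < K2 n := by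
  have := one_le_two_pow (n := n); have := one_le_six_pow (n := n)
  unfold K2; nlinarith

/-- **Surgery lemma.**  For a "pointwise continuous atom" `b` supported in `closedBall x s`,
the localized product `b · cutoff R` decomposes into finitely many continuous atoms plus a
multiple of the central normalized tent `tn 0 (2R)`, with uniformly bounded cost. -/
lemma surgery {R : ℝ} (hR : 1 ≤ R) {b : E n → ℝ} (x : E n) {s : ℝ} (hs : 0 < s)
    (hb : Continuous b) (hsupp : ∀ y ∉ closedBall x s, b y = 0)
    (hbint : (∫ y, b y) = 0)
    (hbd : ∀ y, |b y| ≤ ((volume (closedBall x s)).toReal)⁻¹) :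
    ∃ (L : List (ℝ × (E n → ℝ))) (β : ℝ),
      (∀ p ∈ L, IsInftyAtom n p.2 ∧ Continuous p.2) ∧
      ((L.map fun p => |p.1|).sum ≤ K2 n) ∧
      ∀ y, b y * cutoff R y = (L.map fun p => p.1 * p.2 y).sum + β * tn (0:E n) (2*R) y := by
  have h2n := one_le_two_pow (n := n)
  have h6n := one_le_six_pow (n := n)
  have hR0 : (0:ℝ) < R := by linarith
  have h2R : (0:ℝ) < 2*R := by linarith
  have hvxs : 0 < (volume (closedBall x s)).toReal := vol_cb_toReal_pos x hs
  have hv2R : 0 < (volume (closedBall (0:E n) (2*R))).toReal := vol_cb_toReal_pos _ h2R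
  have hbmeas : AEStronglyMeasurable b volume := hb.aestronglyMeasurable
  have hbI : Integrable b volume := integrable_of_ball x s hbmeas hsupp hbd
  have hinvc : ((volume (closedBall x s)).toReal)⁻¹ * (volume (closedBall x s)).toReal = 1 :=
    inv_mul_cancel₀ hvxs.ne'
  have hL1 : ∫ y, |b y| ≤ 1 := by
    have := integral_abs_le_of_ball x s hbmeas hsupp hbd
    rw [hinvc] at this
    exact this
  by_cases hcase1 : ‖x‖ + s ≤ R
  · -- fully inside: b is already an atom and the cutoff is 1 on its support
    obtain ⟨c, a, hc0, hcle, hatom, hacont, -, -, heq⟩ :=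
      exists_atom_factor x hs hb hsupp hbint hbd
    rw [hinvc] at hcle
    refine ⟨[(c, a)], 0, ?_, ?_, ?_⟩
    · intro p hp
      rw [List.mem_singleton] at hp
      rw [hp]; exact ⟨hatom, hacont⟩
    · simp only [List.map_cons, List.map_nil, List.sum_cons, List.sum_nil, add_zero]
      rw [abs_of_nonneg hc0]
      unfold K2; nlinarith
    · intro y
      simp only [List.map_cons, List.map_nil, List.sum_cons, List.sum_nil, add_zero,
        zero_mul]
      have hbc : b y * cutoff R y = b y := by
        by_cases hy : y ∈ closedBall x s
        · rw [mem_closedBall, dist_eq_norm] at hy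
          have hyn : ‖y‖ ≤ R := by
            calc ‖y‖ = ‖(y - x) + x‖ := by rw [sub_add_cancel]
              _ ≤ ‖y - x‖ + ‖x‖ := norm_add_le _ _
              _ ≤ R := by linarith
          rw [cutoff_eq_one hR0 hyn, mul_one]
        · rw [hsupp y hy, zero_mul]
      rw [hbc, heq y]
  · by_cases hcase2 : 2*R + s < ‖x‖
    · -- fully outside: the product vanishes
      refine ⟨[], 0, by simp, by simp [K2_pos.le], ?_⟩
      intro y
      simp only [List.map_nil, List.sum_nil, zero_mul, zero_add]
      by_cases hy : y ∈ closedBall x s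
      · rw [mem_closedBall, dist_eq_norm] at hy
        have hyn : 2*R < ‖y‖ := by
          have h' : ‖x‖ ≤ ‖y - x‖ + ‖y‖ := by
            calc ‖x‖ = ‖(x - y) + y‖ := by rw [sub_add_cancel]
              _ ≤ ‖x - y‖ + ‖y‖ := norm_add_le _ _
              _ = ‖y - x‖ + ‖y‖ := by rw [norm_sub_rev]
          linarith
        rw [cutoff_eq_zero hR0 hyn, mul_zero]
      · rw [hsupp y hy, zero_mul]
    · push_neg at hcase1 hcase2
      by_cases hcase3 : R < s
      · -- big atom: cut and repair the mean with the central tent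
        set m : ℝ := ∫ y, b y * cutoff R y with hm
        have hbχcont : Continuous (fun y => b y * cutoff R y) := hb.mul (cutoff_cont R)
        have hbχsupp : ∀ y ∉ closedBall x s, b y * cutoff R y = 0 := by
          intro y hy; rw [hsupp y hy, zero_mul]
        have hbχbd : ∀ y, |b y * cutoff R y| ≤ ((volume (closedBall x s)).toReal)⁻¹ := by
          intro y
          rw [abs_mul]
          calc |b y| * |cutoff R y| ≤ ((volume (closedBall x s)).toReal)⁻¹ * 1 :=
                mul_le_mul (hbd y) (cutoff_abs_le_one R y) (abs_nonneg _) (by positivity)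
            _ = _ := mul_one _
        have hbχI : Integrable (fun y => b y * cutoff R y) volume :=
          integrable_of_ball x s hbχcont.aestronglyMeasurable hbχsupp hbχbd
        have hmabs : |m| ≤ 1 := by
          have h1 : |m| ≤ ∫ y, |b y * cutoff R y| := by
            rw [hm]
            have h0 := norm_integral_le_integral_norm (fun y => b y * cutoff R y) (μ := volume)
            simp only [Real.norm_eq_abs] at h0
            exact h0
          have h2 : ∫ y, |b y * cutoff R y| ≤ ∫ y, |b y| := by
            apply integral_mono hbχI.abs hbI.abs
            intro y
            show |b y * cutoff R y| ≤ |b y|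
            rw [abs_mul]
            calc |b y| * |cutoff R y| ≤ |b y| * 1 :=
              mul_le_mul_of_nonneg_left (cutoff_abs_le_one R y) (abs_nonneg _)
              _ = |b y| := mul_one _
          linarith
        have hvol_comp : (volume (closedBall (0:E n) (2*R))).toReal
            ≤ 2^n * (volume (closedBall x s)).toReal := by
          have h1 : (volume (closedBall (0:E n) (2*R))).toReal
              ≤ 2^n * (volume (closedBall (0:E n) R)).toReal := by
            have := vol_cb_ratio (n:=n) (0:E n) (0:E n) (s := R) (s' := 2*R) hR0 (by linarith)
            have h2 : (2*R/R) = 2 := by field_simp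
            rw [h2] at this; exact this
          have h2 : (volume (closedBall (0:E n) R)).toReal
              ≤ (volume (closedBall x s)).toReal := by
            rw [vol_cb n x s]
            exact ENNReal.toReal_mono (vol_cb_lt_top _ _).ne
              (measure_mono (closedBall_subset_closedBall hcase3.le))
          nlinarith
        set g : E n → ℝ := fun y => b y * cutoff R y - m * tn (0:E n) (2*R) y with hg
        have hgcont : Continuous g := hbχcont.sub (continuous_const.mul (tn_cont _ _))
        have hgsupp : ∀ y ∉ closedBall (0:E n) (2*R), g y = 0 := by
          intro y hy
          rw [hg]
          simp only
          rw [tn_supp _ h2R y hy, mul_zero, sub_zero]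
          rw [mem_closedBall, dist_zero_right] at hy
          push_neg at hy
          rw [cutoff_eq_zero hR0 hy, mul_zero]
        have hgint : (∫ y, g y) = 0 := by
          rw [hg]
          simp only
          rw [integral_sub hbχI ((tn_integrable _ h2R).const_mul m), integral_const_mul,
            tn_integral _ h2R, mul_one, ← hm, sub_self]
        have hgbd : ∀ y, |g y| ≤ 3 * 2^n / (volume (closedBall (0:E n) (2*R))).toReal := by
          intro y
          rw [hg]
          simp only
          have h1 : |b y * cutoff R y| ≤ 2^n / (volume (closedBall (0:E n) (2*R))).toReal := by
            apply le_trans (hbχbd y)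
            rw [inv_eq_one_div, div_le_div_iff₀ hvxs hv2R]
            nlinarith
          have h2 : |m * tn (0:E n) (2*R) y|
              ≤ 2 * 2^n / (volume (closedBall (0:E n) (2*R))).toReal := by
            rw [abs_mul]
            calc |m| * |tn (0:E n) (2*R) y| ≤ 1 * (2 * 2^n / (volume (closedBall (0:E n) (2*R))).toReal) :=
                  mul_le_mul hmabs (tn_bound _ h2R y) (abs_nonneg _) (by norm_num)
              _ = _ := one_mul _
          calc |b y * cutoff R y - m * tn (0:E n) (2*R) y|
              ≤ |b y * cutoff R y| + |m * tn (0:E n) (2*R) y| := abs_sub _ _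
            _ ≤ 2^n / (volume (closedBall (0:E n) (2*R))).toReal
                + 2 * 2^n / (volume (closedBall (0:E n) (2*R))).toReal := add_le_add h1 h2
            _ = 3 * 2^n / (volume (closedBall (0:E n) (2*R))).toReal := by ring
        obtain ⟨c, a, hc0, hcle, hatom, hacont, -, -, heq⟩ :=
          exists_atom_factor (0:E n) h2R hgcont hgsupp hgint hgbd
        have hcle' : c ≤ 3 * 2^n := by
          apply le_trans hcle
          rw [div_mul_eq_mul_div, mul_div_assoc, div_self hv2R.ne', mul_one]
        refine ⟨[(c, a)], m, ?_, ?_, ?_⟩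
        · intro p hp
          rw [List.mem_singleton] at hp
          rw [hp]; exact ⟨hatom, hacont⟩
        · simp only [List.map_cons, List.map_nil, List.sum_cons, List.sum_nil, add_zero]
          rw [abs_of_nonneg hc0]
          unfold K2; nlinarith
        · intro y
          simp only [List.map_cons, List.map_nil, List.sum_cons, List.sum_nil, add_zero]
          have := heq y
          rw [hg] at this
          simp only at this
          linarith [this]
      · -- small straddling atom
        push_neg at hcase3
        obtain ⟨cb, ab, hcb0, hcble, habatom, habcont, -, -, heqb⟩ :=
          exists_atom_factor x hs hb hsupp hbint hbd
        rw [hinvc] at hcble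
        set e : E n → ℝ := fun y => b y * (cutoff R y - cutoff R x) with he
        have hecont : Continuous e := hb.mul ((cutoff_cont R).sub continuous_const)
        have hesupp : ∀ y ∉ closedBall x s, e y = 0 := by
          intro y hy; rw [he]; simp only [hsupp y hy, zero_mul]
        have hebd : ∀ y, |e y| ≤ (s/R) * ((volume (closedBall x s)).toReal)⁻¹ := by
          intro y
          by_cases hy : y ∈ closedBall x s
          · rw [he]
            simp only [abs_mul]
            rw [mem_closedBall, dist_eq_norm] at hy
            have hlip : |cutoff R y - cutoff R x| ≤ s/R := by
              apply le_trans (cutoff_lip hR0 y x)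
              gcongr
            calc |b y| * |cutoff R y - cutoff R x|
                ≤ ((volume (closedBall x s)).toReal)⁻¹ * (s/R) :=
                  mul_le_mul (hbd y) hlip (abs_nonneg _) (by positivity)
              _ = (s/R) * ((volume (closedBall x s)).toReal)⁻¹ := by ring
          · rw [hesupp y hy]
            simp only [abs_zero]
            positivity
        have heI : Integrable e volume :=
          integrable_of_ball x s hecont.aestronglyMeasurable hesupp hebd
        set m' : ℝ := ∫ y, e y with hm'
        have hm'abs : |m'| ≤ s/R := by
          have h1 : |m'| ≤ ∫ y, |e y| := by
            rw [hm']
            have h0 := norm_integral_le_integral_norm e (μ := volume)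
            simp only [Real.norm_eq_abs] at h0
            exact h0
          have h2 : ∫ y, |e y| ≤ (s/R) * ((volume (closedBall x s)).toReal)⁻¹
              * (volume (closedBall x s)).toReal :=
            le_trans (integral_abs_le_of_ball x s hecont.aestronglyMeasurable hesupp hebd)
              (by rw [mul_assoc])
          rw [mul_assoc, hinvc, mul_one] at h2
          linarith
        set w : E n → ℝ := tn x s with hw
        set p2 : E n → ℝ := fun y => e y - m' * w y with hp2
        have hp2cont : Continuous p2 := hecont.sub (continuous_const.mul (tn_cont x s))
        have hp2supp : ∀ y ∉ closedBall x s, p2 y = 0 := by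
          intro y hy
          rw [hp2]
          simp only [hesupp y hy, hw, tn_supp x hs y hy, mul_zero, sub_zero]
        have hp2int : (∫ y, p2 y) = 0 := by
          rw [hp2]
          simp only
          rw [integral_sub heI ((tn_integrable x hs).const_mul m'), integral_const_mul,
            tn_integral x hs, mul_one, ← hm', sub_self]
        have hp2bd : ∀ y, |p2 y|
            ≤ (s/R) * (1 + 2*2^n) * ((volume (closedBall x s)).toReal)⁻¹ := by
          intro y
          rw [hp2]
          simp only
          have h1 : |m' * w y| ≤ (s/R) * (2*2^n * ((volume (closedBall x s)).toReal)⁻¹) := by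
            rw [abs_mul]
            have hwb : |w y| ≤ 2*2^n * ((volume (closedBall x s)).toReal)⁻¹ := by
              rw [hw]
              have := tn_bound x hs y
              rw [div_eq_mul_inv] at this
              exact this
            apply mul_le_mul hm'abs hwb (abs_nonneg _) (by positivity)
          calc |e y - m' * w y| ≤ |e y| + |m' * w y| := abs_sub _ _
            _ ≤ (s/R) * ((volume (closedBall x s)).toReal)⁻¹
                + (s/R) * (2*2^n * ((volume (closedBall x s)).toReal)⁻¹) :=
                add_le_add (hebd y) h1
            _ = (s/R) * (1 + 2*2^n) * ((volume (closedBall x s)).toReal)⁻¹ := by ring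
        obtain ⟨c2, a2, hc20, hc2le, ha2atom, ha2cont, -, -, heq2⟩ :=
          exists_atom_factor x hs hp2cont hp2supp hp2int hp2bd
        have hc2le' : c2 ≤ 1 + 2*2^n := by
          apply le_trans hc2le
          rw [mul_assoc, hinvc, mul_one]
          have hsR1 : s/R ≤ 1 := by rw [div_le_one hR0]; exact hcase3
          nlinarith
        -- the chain
        set k : ℕ := ⌈Real.logb 2 (2*R/s)⌉₊ with hk
        have hrs1 : 1 ≤ 2*R/s := by rw [le_div_iff₀ hs]; linarith
        have hlogb0 : 0 ≤ Real.logb 2 (2*R/s) := Real.logb_nonneg (by norm_num) hrs1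
        have hklow : 2*R ≤ s * 2^k := by
          have h1 : Real.logb 2 (2*R/s) ≤ (k:ℝ) := Nat.le_ceil _
          have h2 : (2*R/s) ≤ 2^(k:ℝ) := by
            calc (2*R/s) = 2^(Real.logb 2 (2*R/s)) :=
                  (Real.rpow_logb (by norm_num) (by norm_num) (by linarith)).symm
              _ ≤ 2^(k:ℝ) := Real.rpow_le_rpow_of_exponent_le (by norm_num) h1
          rw [Real.rpow_natCast] at h2
          rw [div_le_iff₀ hs] at h2
          linarith [h2]
        have hznorm : ‖x‖ ≤ 4*R := by linarith
        obtain ⟨Lc, hLcatom, hLccost, hLceq⟩ :=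
          tn_chain hR k x s hs (by linarith) hznorm hklow
        have hchaincost : |m'| * ((Lc.map fun p => |p.1|).sum) ≤ 24 * (2^n * 6^n) := by
          have hcoef : |m'| * ((4 * 2 ^ n * 6 ^ n) * (k+1)) ≤ (4 * 2^n * 6^n) * 6 := by
            have hb1 : |m'| * ((k:ℝ)+1) ≤ 6 := by
              have hkup : (k:ℝ) < Real.logb 2 (2*R/s) + 1 := Nat.ceil_lt_add_one hlogb0
              have hx0 : 0 < s/R := by positivity
              have hx1 : s/R ≤ 1 := by rw [div_le_one hR0]; exact hcase3
              have hrw : 2*R/s = 2/(s/R) := by field_simp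
              have := xlogx_bound hx0 hx1
              rw [← hrw] at this
              have hm'0 : 0 ≤ |m'| := abs_nonneg _
              calc |m'| * ((k:ℝ)+1) ≤ (s/R) * ((k:ℝ)+1) := by
                    apply mul_le_mul_of_nonneg_right hm'abs (by positivity)
                _ ≤ (s/R) * (Real.logb 2 (2*R/s) + 2) := by
                    apply mul_le_mul_of_nonneg_left _ hx0.le
                    linarith
                _ ≤ 6 := this
            calc |m'| * ((4 * 2 ^ n * 6 ^ n) * (k+1))
                = (4 * 2^n * 6^n) * (|m'| * ((k:ℝ)+1)) := by push_cast; ring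
              _ ≤ (4 * 2^n * 6^n) * 6 := by
                  apply mul_le_mul_of_nonneg_left hb1 (by positivity)
          calc |m'| * ((Lc.map fun p => |p.1|).sum)
              ≤ |m'| * ((4 * 2 ^ n * 6 ^ n) * (k+1)) := by
                apply mul_le_mul_of_nonneg_left hLccost (abs_nonneg _)
            _ ≤ (4 * 2^n * 6^n) * 6 := hcoef
            _ = 24 * (2^n * 6^n) := by ring
        refine ⟨(cutoff R x * cb, ab) :: (c2, a2) :: (Lc.map fun p => (m' * p.1, p.2)), m',
          ?_, ?_, ?_⟩
        · intro p hp
          rcases List.mem_cons.mp hp with h | h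
          · rw [h]; exact ⟨habatom, habcont⟩
          rcases List.mem_cons.mp h with h' | h'
          · rw [h']; exact ⟨ha2atom, ha2cont⟩
          · obtain ⟨q, hq, rfl⟩ := List.mem_map.mp h'
            exact hLcatom q hq
        · simp only [List.map_cons, List.sum_cons]
          rw [list_scale_cost]
          have h1 : |cutoff R x * cb| ≤ 1 := by
            rw [abs_mul]
            calc |cutoff R x| * |cb| ≤ 1 * 1 :=
                  mul_le_mul (cutoff_abs_le_one R x) (by rwa [abs_of_nonneg hcb0])
                    (abs_nonneg _) zero_le_one
              _ = 1 := one_mul _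
          have h2 : |c2| ≤ 1 + 2*2^n := by rwa [abs_of_nonneg hc20]
          unfold K2
          linarith [h1, h2, hchaincost, h2n]
        · intro y
          simp only [List.map_cons, List.sum_cons]
          rw [list_scale_sum]
          have hsplit : b y * cutoff R y = cutoff R x * b y + e y := by
            rw [he]; ring
          have hterm1 : cutoff R x * b y = (cutoff R x * cb) * ab y := by
            rw [heqb y]; ring
          have hterm2 : e y = c2 * a2 y + m' * w y := by
            have := heq2 y
            rw [hp2] at this
            simp only at this
            linarith
          have hterm3 : w y = (Lc.map fun p => p.1 * p.2 y).sum + tn (0:E n) (2*R) y := by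
            have := hLceq y
            rw [hw]
            linarith
          rw [hsplit, hterm1, hterm2, hterm3]
          ring

end FD

namespace FD
lemma isInftyAtom_integral_zero {n : ℕ} {a : E n → ℝ} (h : IsInftyAtom n a) :
    (∫ y, a y) = 0 := by
  obtain ⟨x, r, hr, hm, hs, hi, hb⟩ := h
  exact hi
end FD

namespace FD

variable {n : ℕ}

/-- Convolution with a kernel, written with explicit integrals. -/
noncomputable def conv (g φ : E n → ℝ) : E n → ℝ := fun x => ∫ y, g y * φ (x - y)

lemma conv_eq_convolution (g φ : E n → ℝ) :
    conv g φ = g ⋆[ContinuousLinearMap.lsmul ℝ ℝ, volume] φ := by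
  funext x
  simp [conv, convolution, ContinuousLinearMap.lsmul_apply, smul_eq_mul]

lemma hcs_of_ball {φ : E n → ℝ} {x : E n} {r : ℝ} (h : ∀ y ∉ closedBall x r, φ y = 0) :
    HasCompactSupport φ :=
  HasCompactSupport.intro (isCompact_closedBall x r) h

lemma conv_cont {g φ : E n → ℝ} (hg : Integrable g volume) (hφc : Continuous φ)
    {x : E n} {r : ℝ} (hφs : ∀ y ∉ closedBall x r, φ y = 0) :
    Continuous (conv g φ) := by
  rw [conv_eq_convolution]
  exact (hcs_of_ball hφs).continuous_convolution_right _ hg.locallyIntegrable hφc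

lemma conv_supp {g φ : E n → ℝ} {x : E n} {r t : ℝ}
    (hg : ∀ y ∉ closedBall x r, g y = 0) (hφs : ∀ y ∉ closedBall (0:E n) t, φ y = 0) :
    ∀ y ∉ closedBall x (r + t), conv g φ y = 0 := by
  intro y hy
  rw [conv_eq_convolution]
  apply Function.notMem_support.mp
  intro hmem
  have hsub := support_convolution_subset (μ := volume)
    (L := ContinuousLinearMap.lsmul ℝ ℝ) (f := g) (g := φ) hmem
  rw [Set.mem_add] at hsub
  obtain ⟨u, hu, v, hv, huv⟩ := hsub
  have hu' : u ∈ closedBall x r := by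
    by_contra h
    exact hu (hg u h)
  have hv' : v ∈ closedBall (0:E n) t := by
    by_contra h
    exact hv (hφs v h)
  rw [mem_closedBall, dist_eq_norm] at hu' hv'
  rw [sub_zero] at hv'
  apply hy
  rw [mem_closedBall, dist_eq_norm, ← huv]
  calc ‖u + v - x‖ = ‖(u - x) + v‖ := by
        congr 1
        abel
    _ ≤ ‖u - x‖ + ‖v‖ := norm_add_le _ _
    _ ≤ r + t := add_le_add hu' hv'

lemma conv_integral {g φ : E n → ℝ} (hg : Integrable g volume) (hφ : Integrable φ volume)
    (hφ1 : (∫ y, φ y) = 1) : (∫ y, conv g φ y) = ∫ y, g y := by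
  rw [conv_eq_convolution]
  have := integral_convolution (ContinuousLinearMap.lsmul ℝ ℝ) hg hφ
  simp only [ContinuousLinearMap.lsmul_apply, smul_eq_mul] at this
  rw [this, hφ1, mul_one]

lemma conv_integrand_integrable {g φ : E n → ℝ} (hg : Integrable g volume)
    (hφm : AEStronglyMeasurable φ volume) {Mt : ℝ} (hφb : ∀ y, |φ y| ≤ Mt) (x : E n) :
    Integrable (fun y => g y * φ (x - y)) volume := by
  have h : Integrable (fun y => φ (x - y) * g y) volume := by
    apply hg.bdd_mul
    · exact hφm.comp_quasiMeasurePreserving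
        (quasiMeasurePreserving_sub_left volume x)
    · exact Eventually.of_forall fun y => by rw [Real.norm_eq_abs]; exact hφb (x - y)
  have heq : (fun y => g y * φ (x - y)) = (fun y => φ (x - y) * g y) := by
    funext y; ring
  rw [heq]
  exact h

lemma conv_bound_L1 {g φ : E n → ℝ} (hg : Integrable g volume)
    (hφm : AEStronglyMeasurable φ volume) {Mt : ℝ} (hφn : ∀ y, 0 ≤ φ y)
    (hφb : ∀ y, φ y ≤ Mt) (x : E n) :
    |conv g φ x| ≤ Mt * ∫ y, |g y| := by
  have hMt : 0 ≤ Mt := le_trans (hφn x) (hφb x)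
  have hφb' : ∀ y, |φ y| ≤ Mt := fun y => by rw [abs_of_nonneg (hφn y)]; exact hφb y
  have hI := conv_integrand_integrable hg hφm hφb' x
  have h1 : |conv g φ x| ≤ ∫ y, |g y * φ (x - y)| := by
    have h0 := norm_integral_le_integral_norm (fun y => g y * φ (x - y)) (μ := volume)
    simp only [Real.norm_eq_abs] at h0
    exact h0
  have h2 : ∫ y, |g y * φ (x - y)| ≤ ∫ y, |g y| * Mt := by
    apply integral_mono hI.abs (hg.abs.mul_const Mt)
    intro y
    show |g y * φ (x - y)| ≤ |g y| * Mt
    rw [abs_mul]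
    exact mul_le_mul_of_nonneg_left (hφb' _) (abs_nonneg _)
  rw [integral_mul_const] at h2
  calc |conv g φ x| ≤ (∫ y, |g y|) * Mt := le_trans h1 h2
    _ = Mt * ∫ y, |g y| := by ring

lemma conv_bound_ae {g φ : E n → ℝ} (hg : Integrable g volume)
    (hφc : Continuous φ) {t : ℝ} (ht : 0 < t)
    (hφs : ∀ y ∉ closedBall (0:E n) t, φ y = 0) (hφn : ∀ y, 0 ≤ φ y)
    (hφ1 : (∫ y, φ y) = 1) {Mt : ℝ} (hφb : ∀ y, φ y ≤ Mt)
    {c : ℝ} (hc : 0 ≤ c) (hae : ∀ᵐ y ∂(volume : Measure (E n)), |g y| ≤ c) (x : E n) :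
    |conv g φ x| ≤ c := by
  have hφb' : ∀ y, |φ y| ≤ Mt := fun y => by rw [abs_of_nonneg (hφn y)]; exact hφb y
  have hI := conv_integrand_integrable hg hφc.aestronglyMeasurable hφb' x
  have hφtr : Integrable (fun y => φ (x - y)) volume := by
    apply integrable_of_ball (g := fun y => φ (x - y)) x t
    · exact hφc.aestronglyMeasurable.comp_quasiMeasurePreserving
        (quasiMeasurePreserving_sub_left volume x)
    · intro y hy
      apply hφs
      rw [mem_closedBall, dist_eq_norm] at hy ⊢
      rw [sub_zero, norm_sub_rev]
      exact hy
    · exact fun y => hφb' _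
  have h1 : |conv g φ x| ≤ ∫ y, |g y * φ (x - y)| := by
    have h0 := norm_integral_le_integral_norm (fun y => g y * φ (x - y)) (μ := volume)
    simp only [Real.norm_eq_abs] at h0
    exact h0
  have h2 : ∫ y, |g y * φ (x - y)| ≤ ∫ y, c * φ (x - y) := by
    apply integral_mono_ae hI.abs (hφtr.const_mul c)
    filter_upwards [hae] with y hy
    show |g y * φ (x - y)| ≤ c * φ (x - y)
    rw [abs_mul, abs_of_nonneg (hφn (x - y))]
    exact mul_le_mul_of_nonneg_right hy (hφn _)
  have h3 : ∫ y, c * φ (x - y) = c := by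
    rw [integral_const_mul, integral_sub_left_eq_self φ volume x, hφ1, mul_one]
  linarith
  
lemma conv_approx {f φ : E n → ℝ} (hf : Integrable f volume)
    (hφc : Continuous φ) {t : ℝ} (ht : 0 < t)
    (hφs : ∀ y ∉ closedBall (0:E n) t, φ y = 0) (hφn : ∀ y, 0 ≤ φ y)
    (hφ1 : (∫ y, φ y) = 1) {Mt : ℝ} (hφb : ∀ y, φ y ≤ Mt)
    {ε : ℝ} (hε : 0 ≤ ε) (hmod : ∀ z y : E n, ‖z - y‖ ≤ t → |f z - f y| ≤ ε) (x : E n) :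
    |f x - conv f φ x| ≤ ε := by
  have hφb' : ∀ y, |φ y| ≤ Mt := fun y => by rw [abs_of_nonneg (hφn y)]; exact hφb y
  have hI := conv_integrand_integrable hf hφc.aestronglyMeasurable hφb' x
  have hφtr : Integrable (fun y => φ (x - y)) volume := by
    apply integrable_of_ball (g := fun y => φ (x - y)) x t
    · exact hφc.aestronglyMeasurable.comp_quasiMeasurePreserving
        (quasiMeasurePreserving_sub_left volume x)
    · intro y hy
      apply hφs
      rw [mem_closedBall, dist_eq_norm] at hy ⊢
      rw [sub_zero, norm_sub_rev]
      exact hy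
    · exact fun y => hφb' _
  have h1 : f x = ∫ y, f x * φ (x - y) := by
    rw [integral_const_mul, integral_sub_left_eq_self φ volume x, hφ1, mul_one]
  have h2 : f x - conv f φ x = ∫ y, (f x - f y) * φ (x - y) := by
    have hsplit : (fun y => (f x - f y) * φ (x - y))
        = fun y => f x * φ (x - y) - f y * φ (x - y) := funext fun y => by ring
    rw [conv]
    rw [hsplit, integral_sub (hφtr.const_mul (f x)) hI, ← h1]
  rw [h2]
  have h3 : |∫ y, (f x - f y) * φ (x - y)| ≤ ∫ y, |(f x - f y) * φ (x - y)| := by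
    have h0 := norm_integral_le_integral_norm (fun y => (f x - f y) * φ (x - y)) (μ := volume)
    simp only [Real.norm_eq_abs] at h0
    exact h0
  have hIsub : Integrable (fun y => (f x - f y) * φ (x - y)) volume := by
    have : (fun y => (f x - f y) * φ (x - y))
        = fun y => f x * φ (x - y) - f y * φ (x - y) := by
      funext y; ring
    rw [this]
    exact (hφtr.const_mul (f x)).sub hI
  have h4 : ∫ y, |(f x - f y) * φ (x - y)| ≤ ∫ y, ε * φ (x - y) := by
    apply integral_mono hIsub.abs (hφtr.const_mul ε)
    intro y
    show |(f x - f y) * φ (x - y)| ≤ ε * φ (x - y)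
    by_cases hy : x - y ∈ closedBall (0:E n) t
    · rw [mem_closedBall, dist_zero_right] at hy
      rw [abs_mul, abs_of_nonneg (hφn (x - y))]
      exact mul_le_mul_of_nonneg_right (hmod x y hy) (hφn _)
    · rw [hφs _ hy, mul_zero, abs_zero]
      positivity
  have h5 : ∫ y, ε * φ (x - y) = ε := by
    rw [integral_const_mul, integral_sub_left_eq_self φ volume x, hφ1, mul_one]
  linarith

/-- a.e. bound for a function with essential sup bounded by the inverse volume. -/
lemma ae_abs_le {g : E n → ℝ} {x : E n} {r : ℝ} (hr : 0 < r)
    (hbound : eLpNorm g ⊤ volume ≤ (volume (closedBall x r))⁻¹) :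
    ∀ᵐ y ∂(volume : Measure (E n)), |g y| ≤ ((volume (closedBall x r)).toReal)⁻¹ := by
  filter_upwards [ae_le_eLpNormEssSup (f := g) (μ := volume)] with y hy
  have h1 : (‖g y‖₊ : ENNReal) ≤ (volume (closedBall x r))⁻¹ := by
    apply le_trans hy
    rw [← eLpNorm_exponent_top]
    exact hbound
  have h2 : ((‖g y‖₊ : ENNReal)).toReal ≤ ((volume (closedBall x r))⁻¹).toReal :=
    ENNReal.toReal_mono (by simp [(vol_cb_pos x hr).ne']) h1
  rw [ENNReal.coe_toReal, coe_nnnorm, Real.norm_eq_abs, ENNReal.toReal_inv] at h2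
  exact h2

lemma atom_l1_real {a : E n → ℝ} (ha : IsInftyAtom n a) : ∫ y, |a y| ≤ 1 := by
  have h := atom_int ha
  have := ENNReal.toReal_mono (by simp) h.2
  rw [eLpNorm_one_eq_lintegral_enorm, ← integral_norm_eq_lintegral_enorm h.1.1] at this
  simp only [Real.norm_eq_abs] at this
  simpa using this

/-- Mollifying an atom with the normalized tent of radius `t` produces a multiple of a
"pointwise continuous atom", with uniformly bounded factor `2·4^n`. -/
lemma mollify_atom {t : ℝ} (ht : 0 < t) {a : E n → ℝ} (ha : IsInftyAtom n a) :
    ∃ (c : ℝ) (b : E n → ℝ) (x : E n) (s : ℝ), 0 < s ∧ 0 ≤ c ∧ c ≤ 2 * 4^n ∧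
      Continuous b ∧ (∀ y ∉ closedBall x s, b y = 0) ∧ (∫ y, b y) = 0 ∧
      (∀ y, |b y| ≤ ((volume (closedBall x s)).toReal)⁻¹) ∧
      (∀ y, conv a (tn (0:E n) t) y = c * b y) := by
  obtain ⟨x, r, hr, hmem, hsupp, hint, hbound⟩ := ha
  have haI : Integrable a volume := (atom_int ⟨x, r, hr, hmem, hsupp, hint, hbound⟩).1
  have haL1 : ∫ y, |a y| ≤ 1 := atom_l1_real ⟨x, r, hr, hmem, hsupp, hint, hbound⟩
  have hae := ae_abs_le hr hbound
  set φ : E n → ℝ := tn (0:E n) t with hφ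
  have hφc : Continuous φ := tn_cont _ _
  have hφs : ∀ y ∉ closedBall (0:E n) t, φ y = 0 := tn_supp _ ht
  have hφn : ∀ y, 0 ≤ φ y := tn_nonneg _ ht
  have hφ1 : (∫ y, φ y) = 1 := tn_integral _ ht
  set Mt : ℝ := 2 * 2^n / (volume (closedBall (0:E n) t)).toReal with hMt
  have hφb : ∀ y, φ y ≤ Mt := by
    intro y
    have := tn_bound (0:E n) ht y
    rw [abs_of_nonneg (hφn y)] at this
    exact this
  have hvr : 0 < (volume (closedBall x r)).toReal := vol_cb_toReal_pos x hr
  have hvt : 0 < (volume (closedBall (0:E n) t)).toReal := vol_cb_toReal_pos _ ht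
  have hvrt : 0 < (volume (closedBall x (r+t))).toReal := vol_cb_toReal_pos x (by linarith)
  set g : E n → ℝ := conv a φ with hg
  have hgc : Continuous g := conv_cont haI hφc hφs
  have hgsupp : ∀ y ∉ closedBall x (r + t), g y = 0 := conv_supp hsupp hφs
  have hgint : (∫ y, g y) = 0 := by
    rw [hg, conv_integral haI (tn_integrable _ ht) hφ1, hint]
  -- two bounds on g
  have hgbd1 : ∀ y, |g y| ≤ ((volume (closedBall x r)).toReal)⁻¹ := fun y =>
    conv_bound_ae haI hφc ht hφs hφn hφ1 hφb (by positivity) hae y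
  have hgbd2 : ∀ y, |g y| ≤ Mt := by
    intro y
    have h1 := conv_bound_L1 haI hφc.aestronglyMeasurable hφn hφb y
    have hMt0 : 0 ≤ Mt := le_trans (hφn 0) (hφb 0)
    calc |g y| ≤ Mt * ∫ z, |a z| := h1
      _ ≤ Mt * 1 := mul_le_mul_of_nonneg_left haL1 hMt0
      _ = Mt := mul_one _
  by_cases hcase : t ≤ r
  · -- use the inverse-volume bound
    obtain ⟨c, b, hc0, hcle, hatom, hbcont, hbsupp, hbbd, heq⟩ :=
      exists_atom_factor (g := g) x (r := r + t) (by linarith) hgc hgsupp hgint hgbd1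
    refine ⟨c, b, x, r + t, by linarith, hc0, ?_, hbcont, hbsupp, ?_, hbbd, heq⟩
    · apply le_trans hcle
      have hratio : (volume (closedBall x (r+t))).toReal
          ≤ ((r+t)/r) ^ n * (volume (closedBall x r)).toReal :=
        vol_cb_ratio x x hr (by linarith)
      have hratio2 : ((r+t)/r) ^ n ≤ 2 ^ n := by
        apply pow_le_pow_left₀ (by positivity)
        rw [div_le_iff₀ hr]
        linarith
      calc ((volume (closedBall x r)).toReal)⁻¹ * (volume (closedBall x (r+t))).toReal
          ≤ ((volume (closedBall x r)).toReal)⁻¹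
            * (2 ^ n * (volume (closedBall x r)).toReal) := by
            apply mul_le_mul_of_nonneg_left _ (by positivity)
            calc (volume (closedBall x (r+t))).toReal
                ≤ ((r+t)/r) ^ n * (volume (closedBall x r)).toReal := hratio
              _ ≤ 2 ^ n * (volume (closedBall x r)).toReal := by
                  apply mul_le_mul_of_nonneg_right hratio2 hvr.le
        _ = 2 ^ n := by field_simp
        _ ≤ 2 * 4 ^ n := by
            have h1 : (2:ℝ) ^ n ≤ 4 ^ n := pow_le_pow_left₀ (by norm_num) (by norm_num) n
            have h2 : (0:ℝ) ≤ 4 ^ n := by positivity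
            linarith
    · exact (isInftyAtom_integral_zero hatom)
  · -- use the kernel sup bound
    push_neg at hcase
    obtain ⟨c, b, hc0, hcle, hatom, hbcont, hbsupp, hbbd, heq⟩ :=
      exists_atom_factor (g := g) x (r := r + t) (by linarith) hgc hgsupp hgint hgbd2
    refine ⟨c, b, x, r + t, by linarith, hc0, ?_, hbcont, hbsupp, ?_, hbbd, heq⟩
    · apply le_trans hcle
      have hratio : (volume (closedBall x (r+t))).toReal
          ≤ ((r+t)/t) ^ n * (volume (closedBall (0:E n) t)).toReal := by
        have h := vol_cb_ratio (n := n) (0:E n) x (s := t) (s' := r + t) ht (by linarith)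
        exact h
      have hratio2 : ((r+t)/t) ^ n ≤ 2 ^ n := by
        apply pow_le_pow_left₀ (by positivity)
        rw [div_le_iff₀ ht]
        linarith
      calc Mt * (volume (closedBall x (r+t))).toReal
          ≤ Mt * (2 ^ n * (volume (closedBall (0:E n) t)).toReal) := by
            apply mul_le_mul_of_nonneg_left _ (by positivity)
            calc (volume (closedBall x (r+t))).toReal
                ≤ ((r+t)/t) ^ n * (volume (closedBall (0:E n) t)).toReal := hratio
              _ ≤ 2 ^ n * (volume (closedBall (0:E n) t)).toReal :=
                  mul_le_mul_of_nonneg_right hratio2 hvt.le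
        _ = 2 * 2 ^ n * 2 ^ n := by rw [hMt]; field_simp
        _ ≤ 2 * 4 ^ n := by
            have h1 : (2:ℝ) ^ n * 2 ^ n = 4 ^ n := by
              rw [← mul_pow]; norm_num
            nlinarith [one_le_two_pow (n := n)]
    · exact (isInftyAtom_integral_zero hatom)

end FD

namespace FD

variable {n : ℕ}

lemma list_sum_get {β : Type*} [AddCommMonoid β] (L : List (ℝ × (E n → ℝ)))
    (g : ℝ × (E n → ℝ) → β) : (L.map g).sum = ∑ j : Fin L.length, g (L.get j) := by
  induction L with
  | nil => simp
  | cons a L ih =>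
    rw [List.map_cons, List.sum_cons, ih]
    show g a + ∑ j : Fin L.length, g (L.get j) = ∑ j : Fin (L.length + 1), g ((a :: L).get j)
    rw [Fin.sum_univ_succ]
    simp

lemma list_atoms_int (L : List (ℝ × (E n → ℝ))) (hL : ∀ p ∈ L, IsInftyAtom n p.2) :
    Integrable (fun y => (L.map fun p => p.1 * p.2 y).sum) volume ∧
      (∫ y, (L.map fun p => p.1 * p.2 y).sum) = 0 := by
  induction L with
  | nil => simp [integrable_const]
  | cons p L ih =>
    have hp := hL p List.mem_cons_self
    have hLtail := ih (fun q hq => hL q (List.mem_cons_of_mem p hq))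
    have hpI : Integrable (fun y => p.1 * p.2 y) volume :=
      (atom_int hp).1.const_mul p.1
    simp only [List.map_cons, List.sum_cons]
    constructor
    · exact hpI.add hLtail.1
    · rw [integral_add hpI hLtail.1, hLtail.2, add_zero, integral_const_mul,
        isInftyAtom_integral_zero hp, mul_zero]

end FD


/- **Theorem (finite decompositions into continuous `(1,∞)`-atoms).**
For `n ≥ 1` there is a constant `C > 0` such that every continuous `f` in `H^{1,∞}_fin(ℝⁿ)`
admits a finite decomposition `f = ∑_{j=1}^N λ_j a_j` in which each `a_j` is a *continuous*
`(1,∞)`-atom and `∑_{j=1}^N |λ_j| ≤ C ‖f‖_{H¹}`. -/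
open FD in
set_option maxHeartbeats 1600000 in
theorem finite_decomposition_continuous_atoms (n : ℕ) (hn : 1 ≤ n) :
    ∃ C : ℝ, 0 < C ∧
      ∀ f : E n → ℝ, Continuous f → MemH1Fin n (IsInftyAtom n) f →
        ∃ (N : ℕ) (l : Fin N → ℝ) (a : Fin N → E n → ℝ),
          (∀ j, IsInftyAtom n (a j) ∧ Continuous (a j)) ∧
          (∀ x, f x = ∑ j, l j * a j x) ∧
          (∑ j, |l j|) ≤ C * H1Norm n (IsInftyAtom n) f := by
  classical
  have hK2 := K2_pos (n := n)
  have h4n : (0:ℝ) < 4^n := by positivity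
  refine ⟨4 * 4^n * K2 n + 1, by nlinarith, ?_⟩
  intro f hfc hfmem
  by_cases hf0 : ∃ x₀, f x₀ ≠ 0
  swap
  · push_neg at hf0
    refine ⟨0, fun j => j.elim0, fun j => j.elim0, fun j => j.elim0, ?_, ?_⟩
    · intro x
      rw [hf0 x]
      simp
    · simp only [Finset.univ_eq_empty, Finset.sum_empty]
      have := h1norm_nonneg (n := n) f
      exact mul_nonneg (by nlinarith) this
  obtain ⟨x₀, hx₀⟩ := hf0
  -- support radius
  obtain ⟨N₀, l₀, a₀, hatoms₀, hsum₀⟩ := id hfmem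
  have hballs : ∀ j : Fin N₀, ∃ ρ : ℝ, 0 ≤ ρ ∧ ∀ y : E n, ρ < ‖y‖ → a₀ j y = 0 := by
    intro j
    obtain ⟨x, r, hr, -, hsupp, -, -⟩ := hatoms₀ j
    refine ⟨‖x‖ + r, by positivity, ?_⟩
    intro y hy
    apply hsupp y
    rw [mem_closedBall, dist_eq_norm]
    push_neg
    have h1 : ‖y‖ ≤ ‖y - x‖ + ‖x‖ := by
      calc ‖y‖ = ‖(y - x) + x‖ := by rw [sub_add_cancel]
        _ ≤ ‖y - x‖ + ‖x‖ := norm_add_le _ _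
    linarith
  choose ρ hρ0 hρsupp using hballs
  set R : ℝ := 1 + ∑ j, ρ j with hRdef
  have hρsum : 0 ≤ ∑ j, ρ j := Finset.sum_nonneg fun j _ => hρ0 j
  have hR : 1 ≤ R := by rw [hRdef]; linarith
  have hR0 : (0:ℝ) < R := by linarith
  have h2R : (0:ℝ) < 2*R := by linarith
  have hfR : ∀ y ∉ closedBall (0:E n) R, f y = 0 := by
    intro y hy
    rw [mem_closedBall, dist_zero_right] at hy
    push_neg at hy
    rw [hsum₀ y]
    apply Finset.sum_eq_zero
    intro j _
    rw [hρsupp j y ?_, mul_zero]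
    have : ρ j ≤ ∑ i, ρ i := Finset.single_le_sum (fun i _ => hρ0 i) (Finset.mem_univ j)
    linarith
  have hfcs : HasCompactSupport f := hcs_of_ball hfR
  have hfI : Integrable f volume := hfc.integrable_of_hasCompactSupport hfcs
  have hfint0 : (∫ y, f y) = 0 := by
    have h1 : (∫ y, f y) = ∫ y, ∑ j, l₀ j * a₀ j y := by
      congr 1; funext y; exact hsum₀ y
    rw [h1, integral_finset_sum _ (fun j _ => ((atom_int (hatoms₀ j)).1.const_mul (l₀ j)))]
    apply Finset.sum_eq_zero
    intro j _
    rw [integral_const_mul, isInftyAtom_integral_zero (hatoms₀ j), mul_zero]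
  -- positivity of the H¹ norm
  set h : ℝ := H1Norm n (IsInftyAtom n) f with hhdef
  have hh : 0 < h := h1norm_pos hfc hfI hfmem hx₀
  -- near-optimal decomposition
  obtain ⟨l, a, hatoms, hsummable, htend, hlsum⟩ :=
    exists_near_decomposition hfmem (show h < 2*h by linarith)
  have hlsum' : ∀ N : ℕ, ∑ j ∈ Finset.range N, |l j| ≤ 2*h := fun N =>
    le_trans (Summable.sum_le_tsum _ (fun _ _ => abs_nonneg _) hsummable) hlsum.le
  -- constants
  set V : ℝ := (volume (closedBall (0:E n) (2*R))).toReal with hVdef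
  have hV : 0 < V := vol_cb_toReal_pos _ h2R
  set cU : ℝ := 2*2^n / V with hcUdef
  have hcU : 0 < cU := by positivity
  have hUbd : ∀ y, |tn (0:E n) (2*R) y| ≤ cU := fun y => tn_bound _ h2R y
  set D : ℝ := (1 + V * cU) * V with hDdef
  have hD : 0 < D := by positivity
  set ε₁ : ℝ := h / (2*D) with hε₁def
  have hε₁ : 0 < ε₁ := by positivity
  -- uniform continuity and mollification scale
  obtain ⟨δ, hδ, hδ'⟩ := Metric.uniformContinuous_iff.mp
    (hfc.uniformContinuous_of_tendsto_cocompact hfcs.is_zero_at_infty) ε₁ hε₁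
  set t : ℝ := δ/2 with htdef
  have ht : 0 < t := by rw [htdef]; linarith
  have hmod : ∀ z y : E n, ‖z - y‖ ≤ t → |f z - f y| ≤ ε₁ := by
    intro z y hzy
    have hd : dist z y < δ := by
      rw [dist_eq_norm]
      rw [htdef] at hzy
      linarith
    have := hδ' hd
    rw [Real.dist_eq] at this
    exact this.le
  -- the mollifier
  set φ : E n → ℝ := tn (0:E n) t with hφdef
  have hφc : Continuous φ := tn_cont _ _
  have hφs : ∀ y ∉ closedBall (0:E n) t, φ y = 0 := tn_supp _ ht
  have hφn : ∀ y, 0 ≤ φ y := tn_nonneg _ ht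
  have hφ1 : (∫ y, φ y) = 1 := tn_integral _ ht
  set Mt : ℝ := 2 * 2^n / (volume (closedBall (0:E n) t)).toReal with hMtdef
  have hMt : 0 < Mt := by
    have := vol_cb_toReal_pos (0:E n) ht
    positivity
  have hφb : ∀ y, φ y ≤ Mt := by
    intro y
    have := tn_bound (0:E n) ht y
    rw [abs_of_nonneg (hφn y)] at this
    exact this
  have hφb' : ∀ y, |φ y| ≤ Mt := fun y => by rw [abs_of_nonneg (hφn y)]; exact hφb y
  set ε₂ : ℝ := h / (2*D*Mt) with hε₂def
  have hε₂ : 0 < ε₂ := by positivity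
  set η : ℝ := ε₁ + Mt * ε₂ with hηdef
  have hη : 0 < η := by positivity
  have hηD : η * D = h := by
    rw [hηdef, hε₁def, hε₂def]
    field_simp
    ring
  -- truncation index
  have hev : ∀ᶠ N in atTop,
      eLpNorm (fun x => f x - ∑ j ∈ Finset.range N, l j * a j x) 1 volume
        < ENNReal.ofReal ε₂ :=
    htend.eventually_lt_const (ENNReal.ofReal_pos.mpr hε₂)
  obtain ⟨N, hN⟩ := hev.exists
  have haI : ∀ j : ℕ, Integrable (a j) volume := fun j => (atom_int (hatoms j)).1
  have hSNI : Integrable (fun z => ∑ j ∈ Finset.range N, l j * a j z) volume :=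
    integrable_finset_sum _ (fun j _ => (haI j).const_mul (l j))
  have hfSNI : Integrable (fun z => f z - ∑ j ∈ Finset.range N, l j * a j z) volume :=
    hfI.sub hSNI
  have hL1N : ∫ z, |f z - ∑ j ∈ Finset.range N, l j * a j z| ≤ ε₂ := by
    have h1 : (eLpNorm (fun z => f z - ∑ j ∈ Finset.range N, l j * a j z) 1 volume).toReal
        ≤ ε₂ := by
      calc (eLpNorm (fun z => f z - ∑ j ∈ Finset.range N, l j * a j z) 1 volume).toReal
          ≤ (ENNReal.ofReal ε₂).toReal :=
            ENNReal.toReal_mono ENNReal.ofReal_ne_top hN.le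
        _ = ε₂ := ENNReal.toReal_ofReal hε₂.le
    have h2 : (eLpNorm (fun z => f z - ∑ j ∈ Finset.range N, l j * a j z) 1 volume).toReal
        = ∫ z, |f z - ∑ j ∈ Finset.range N, l j * a j z| := by
      rw [eLpNorm_one_eq_lintegral_enorm, ← integral_norm_eq_lintegral_enorm hfSNI.1]
      simp only [Real.norm_eq_abs]
    linarith [h2 ▸ h1]
  -- mollify the atoms
  have hmoll : ∀ j : ℕ, ∃ (c : ℝ) (b : E n → ℝ) (x : E n) (s : ℝ),
      0 < s ∧ 0 ≤ c ∧ c ≤ 2 * 4^n ∧ Continuous b ∧ (∀ y ∉ closedBall x s, b y = 0) ∧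
      (∫ y, b y) = 0 ∧ (∀ y, |b y| ≤ ((volume (closedBall x s)).toReal)⁻¹) ∧
      (∀ y, conv (a j) (tn (0:E n) t) y = c * b y) := fun j => mollify_atom ht (hatoms j)
  choose c b x s hs hc0 hcle hbcont hbsupp hbint hbbd hbeq using hmoll
  -- surgery on the mollified atoms
  have hsurg : ∀ j : ℕ, ∃ (L : List (ℝ × (E n → ℝ))) (β : ℝ),
      (∀ p ∈ L, IsInftyAtom n p.2 ∧ Continuous p.2) ∧
      ((L.map fun p => |p.1|).sum ≤ K2 n) ∧
      ∀ y, b j y * cutoff R y = (L.map fun p => p.1 * p.2 y).sum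
        + β * tn (0:E n) (2*R) y :=
    fun j => surgery hR (x j) (hs j) (hbcont j) (hbsupp j) (hbint j) (hbbd j)
  choose L β hLatoms hLcost hLeq using hsurg
  -- the mollified partial sum and the remainder
  have hconvjcont : ∀ j : ℕ, Continuous (conv (a j) φ) :=
    fun j => conv_cont (haI j) hφc hφs
  set r' : E n → ℝ := fun y => f y - ∑ j ∈ Finset.range N, l j * conv (a j) φ y
    with hr'def
  have hr'y : ∀ y, r' y = f y - ∑ j ∈ Finset.range N, l j * conv (a j) φ y := fun y => rfl
  have hr'cont : Continuous r' := by
    rw [hr'def]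
    exact hfc.sub (continuous_finset_sum _ fun j _ => continuous_const.mul (hconvjcont j))
  have hr'bd : ∀ y, |r' y| ≤ η := by
    intro y
    have hlin : conv f φ y - ∑ j ∈ Finset.range N, l j * conv (a j) φ y
        = conv (fun z => f z - ∑ j ∈ Finset.range N, l j * a j z) φ y := by
      have hsum_int : (fun z => (∑ j ∈ Finset.range N, l j * a j z) * φ (y - z))
          = fun z => ∑ j ∈ Finset.range N, l j * (a j z * φ (y - z)) := by
        funext z
        rw [Finset.sum_mul]
        apply Finset.sum_congr rfl
        intro j _
        ring
      have hI1 : Integrable (fun z => f z * φ (y - z)) volume :=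
        conv_integrand_integrable hfI hφc.aestronglyMeasurable hφb' y
      have hI2 : Integrable (fun z => (∑ j ∈ Finset.range N, l j * a j z) * φ (y - z))
          volume := by
        rw [hsum_int]
        exact integrable_finset_sum _ (fun j _ =>
          (conv_integrand_integrable (haI j) hφc.aestronglyMeasurable hφb' y).const_mul (l j))
      have heq1 : conv (fun z => f z - ∑ j ∈ Finset.range N, l j * a j z) φ y
          = conv f φ y - ∫ z, (∑ j ∈ Finset.range N, l j * a j z) * φ (y - z) := by
        rw [conv]
        have : (fun z => (f z - ∑ j ∈ Finset.range N, l j * a j z) * φ (y - z))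
            = fun z => f z * φ (y - z)
              - (∑ j ∈ Finset.range N, l j * a j z) * φ (y - z) := by
          funext z; ring
        rw [this, integral_sub hI1 hI2]
        rfl
      have heq2 : ∫ z, (∑ j ∈ Finset.range N, l j * a j z) * φ (y - z)
          = ∑ j ∈ Finset.range N, l j * conv (a j) φ y := by
        rw [hsum_int, integral_finset_sum _ (fun j _ =>
          (conv_integrand_integrable (haI j) hφc.aestronglyMeasurable hφb' y).const_mul
            (l j))]
        apply Finset.sum_congr rfl
        intro j _
        rw [integral_const_mul]
        rfl
      rw [heq1, heq2]
    have h1 : |f y - conv f φ y| ≤ ε₁ :=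
      conv_approx hfI hφc ht hφs hφn hφ1 hφb hε₁.le hmod y
    have h2 : |conv (fun z => f z - ∑ j ∈ Finset.range N, l j * a j z) φ y| ≤ Mt * ε₂ := by
      have := conv_bound_L1 hfSNI hφc.aestronglyMeasurable hφn hφb y
      calc |conv (fun z => f z - ∑ j ∈ Finset.range N, l j * a j z) φ y|
          ≤ Mt * ∫ z, |f z - ∑ j ∈ Finset.range N, l j * a j z| := this
        _ ≤ Mt * ε₂ := mul_le_mul_of_nonneg_left hL1N hMt.le
    calc |r' y| = |(f y - conv f φ y)
        + (conv f φ y - ∑ j ∈ Finset.range N, l j * conv (a j) φ y)| := by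
          rw [hr'y y]; ring_nf
      _ ≤ |f y - conv f φ y|
          + |conv f φ y - ∑ j ∈ Finset.range N, l j * conv (a j) φ y| := abs_add_le _ _
      _ ≤ ε₁ + Mt * ε₂ := by
          rw [hlin]
          exact add_le_add h1 h2
      _ = η := hηdef.symm
  -- the coefficient of the central tent
  set κ : ℝ := ∑ j ∈ Finset.range N, l j * c j * β j with hκdef
  -- pointwise identity
  have hident : ∀ y, f y
      = (∑ j ∈ Finset.range N, (l j * c j) * ((L j).map (fun p => p.1 * p.2 y)).sum)
        + (r' y * cutoff R y + κ * tn (0:E n) (2*R) y) := by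
    intro y
    have hfχ : f y * cutoff R y = f y := by
      by_cases hy : y ∈ closedBall (0:E n) R
      · rw [mem_closedBall, dist_zero_right] at hy
        rw [cutoff_eq_one hR0 hy, mul_one]
      · rw [hfR y hy, zero_mul]
    have hstep1 : f y = (∑ j ∈ Finset.range N, l j * conv (a j) φ y) * cutoff R y
        + r' y * cutoff R y := by
      rw [← add_mul]
      have : (∑ j ∈ Finset.range N, l j * conv (a j) φ y) + r' y = f y := by
        rw [hr'y y]; ring
      rw [this, hfχ]
    have hstep2 : (∑ j ∈ Finset.range N, l j * conv (a j) φ y) * cutoff R y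
        = (∑ j ∈ Finset.range N, (l j * c j) * ((L j).map (fun p => p.1 * p.2 y)).sum)
          + κ * tn (0:E n) (2*R) y := by
      rw [Finset.sum_mul]
      have hterm : ∀ j ∈ Finset.range N, l j * conv (a j) φ y * cutoff R y
          = (l j * c j) * ((L j).map (fun p => p.1 * p.2 y)).sum
            + (l j * c j * β j) * tn (0:E n) (2*R) y := by
        intro j _
        rw [show conv (a j) φ y = c j * b j y from hbeq j y]
        have := hLeq j y
        calc l j * (c j * b j y) * cutoff R y
            = (l j * c j) * (b j y * cutoff R y) := by ring
          _ = (l j * c j) * (((L j).map (fun p => p.1 * p.2 y)).sum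
              + β j * tn (0:E n) (2*R) y) := by rw [this]
          _ = (l j * c j) * ((L j).map (fun p => p.1 * p.2 y)).sum
              + (l j * c j * β j) * tn (0:E n) (2*R) y := by ring
      rw [Finset.sum_congr rfl hterm, Finset.sum_add_distrib, hκdef, Finset.sum_mul]
    rw [hstep1, hstep2]
    ring
  -- integral of the remainder determines κ
  have hr'χbd : ∀ y, |r' y * cutoff R y| ≤ η := by
    intro y
    rw [abs_mul]
    calc |r' y| * |cutoff R y| ≤ η * 1 :=
        mul_le_mul (hr'bd y) (cutoff_abs_le_one R y) (abs_nonneg _) hη.le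
      _ = η := mul_one _
  have hr'χsupp : ∀ y ∉ closedBall (0:E n) (2*R), r' y * cutoff R y = 0 := by
    intro y hy
    rw [cutoff_supp hR0 y hy, mul_zero]
  have hr'χcont : Continuous (fun y => r' y * cutoff R y) := hr'cont.mul (cutoff_cont R)
  have hr'χI : Integrable (fun y => r' y * cutoff R y) volume :=
    integrable_of_ball (0:E n) (2*R) hr'χcont.aestronglyMeasurable hr'χsupp hr'χbd
  have hUI : Integrable (tn (0:E n) (2*R)) volume := tn_integrable _ h2R
  have hpiece : ∀ j : ℕ,
      Integrable (fun y => ((L j).map (fun p => p.1 * p.2 y)).sum) volume ∧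
        (∫ y, ((L j).map (fun p => p.1 * p.2 y)).sum) = 0 :=
    fun j => list_atoms_int (L j) (fun p hp => (hLatoms j p hp).1)
  have hκeq : κ = - ∫ y, r' y * cutoff R y := by
    have hPint : Integrable (fun y =>
        ∑ j ∈ Finset.range N, (l j * c j) * ((L j).map (fun p => p.1 * p.2 y)).sum) volume :=
      integrable_finset_sum _ (fun j _ => (hpiece j).1.const_mul _)
    have hremI : Integrable (fun y => r' y * cutoff R y + κ * tn (0:E n) (2*R) y) volume :=
      hr'χI.add (hUI.const_mul κ)
    have h0 : (0:ℝ) = ∫ y, (∑ j ∈ Finset.range N, (l j * c j)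
        * ((L j).map (fun p => p.1 * p.2 y)).sum)
        + (r' y * cutoff R y + κ * tn (0:E n) (2*R) y) := by
      rw [← hfint0]
      congr 1
      funext y
      exact hident y
    rw [integral_add hPint hremI] at h0
    have hP0 : (∫ y, ∑ j ∈ Finset.range N, (l j * c j)
        * ((L j).map (fun p => p.1 * p.2 y)).sum) = 0 := by
      rw [integral_finset_sum _ (fun j _ => (hpiece j).1.const_mul _)]
      apply Finset.sum_eq_zero
      intro j _
      rw [integral_const_mul, (hpiece j).2, mul_zero]
    rw [hP0, zero_add, integral_add hr'χI (hUI.const_mul κ), integral_const_mul,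
      tn_integral _ h2R, mul_one] at h0
    linarith
  have hκbd : |κ| ≤ η * V := by
    rw [hκeq, abs_neg]
    have h1 : |∫ y, r' y * cutoff R y| ≤ ∫ y, |r' y * cutoff R y| := by
      have h0 := norm_integral_le_integral_norm (fun y => r' y * cutoff R y) (μ := volume)
      simp only [Real.norm_eq_abs] at h0
      exact h0
    have h2 := integral_abs_le_of_ball (0:E n) (2*R) hr'χcont.aestronglyMeasurable
      hr'χsupp hr'χbd
    rw [← hVdef] at h2
    linarith
  -- the remainder is a single cheap continuous atom
  set grem : E n → ℝ := fun y => r' y * cutoff R y + κ * tn (0:E n) (2*R) y with hgremdef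
  have hgremcont : Continuous grem := hr'χcont.add (continuous_const.mul (tn_cont _ _))
  have hgremsupp : ∀ y ∉ closedBall (0:E n) (2*R), grem y = 0 := by
    intro y hy
    rw [hgremdef]
    simp only
    rw [hr'χsupp y hy, tn_supp _ h2R y hy, mul_zero, add_zero]
  have hgremint : (∫ y, grem y) = 0 := by
    rw [hgremdef]
    simp only
    rw [integral_add hr'χI (hUI.const_mul κ), integral_const_mul, tn_integral _ h2R,
      mul_one, hκeq]
    ring
  have hgrembd : ∀ y, |grem y| ≤ η + (η * V) * cU := by
    intro y
    rw [hgremdef]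
    simp only
    calc |r' y * cutoff R y + κ * tn (0:E n) (2*R) y|
        ≤ |r' y * cutoff R y| + |κ * tn (0:E n) (2*R) y| := abs_add_le _ _
      _ ≤ η + (η * V) * cU := by
          apply add_le_add (hr'χbd y)
          rw [abs_mul]
          exact mul_le_mul hκbd (hUbd y) (abs_nonneg _) (by positivity)
  obtain ⟨crem, arem, hcrem0, hcremle, hatomrem, hcontrem, -, -, heqrem⟩ :=
    exists_atom_factor (0:E n) h2R hgremcont hgremsupp hgremint hgrembd
  have hcremh : crem ≤ h := by
    calc crem ≤ (η + η * V * cU) * (volume (closedBall (0:E n) (2*R))).toReal := hcremle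
      _ = η * D := by rw [← hVdef, hDdef]; ring
      _ = h := hηD
  -- assemble the final list
  set LL : List (ℝ × (E n → ℝ)) :=
    (List.ofFn (fun j : Fin N => (L (j:ℕ)).map
      (fun p => ((l (j:ℕ) * c (j:ℕ)) * p.1, p.2)))).flatten ++ [(crem, arem)] with hLLdef
  have hLLmem : ∀ p ∈ LL, IsInftyAtom n p.2 ∧ Continuous p.2 := by
    intro p hp
    rw [hLLdef, List.mem_append] at hp
    rcases hp with hp | hp
    · rw [List.mem_flatten] at hp
      obtain ⟨L', hL', hpL'⟩ := hp
      rw [List.mem_ofFn] at hL'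
      obtain ⟨j, hj⟩ := hL'
      rw [← hj] at hpL'
      rw [List.mem_map] at hpL'
      obtain ⟨q, hq, rfl⟩ := hpL'
      exact ⟨(hLatoms (j:ℕ) q hq).1, (hLatoms (j:ℕ) q hq).2⟩
    · rw [List.mem_singleton] at hp
      rw [hp]
      exact ⟨hatomrem, hcontrem⟩
  have hLLsum : ∀ (g : ℝ × (E n → ℝ) → ℝ),
      (LL.map g).sum = (∑ j : Fin N, (((L (j:ℕ)).map
        (fun p => ((l (j:ℕ) * c (j:ℕ)) * p.1, p.2))).map g).sum) + g (crem, arem) := by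
    intro g
    rw [hLLdef, List.map_append, List.sum_append, List.map_flatten, List.map_ofFn,
      List.sum_flatten, List.map_ofFn, List.sum_ofFn]
    simp [Function.comp]
  have hLLid : ∀ y, f y = (LL.map fun p => p.1 * p.2 y).sum := by
    intro y
    rw [hLLsum (fun p => p.1 * p.2 y)]
    have hinner : ∀ j : Fin N, (((L (j:ℕ)).map
        (fun p => ((l (j:ℕ) * c (j:ℕ)) * p.1, p.2))).map (fun p => p.1 * p.2 y)).sum
        = (l (j:ℕ) * c (j:ℕ)) * ((L (j:ℕ)).map (fun p => p.1 * p.2 y)).sum :=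
      fun j => list_scale_sum (L (j:ℕ)) (l (j:ℕ) * c (j:ℕ)) y
    rw [Finset.sum_congr rfl (fun j _ => hinner j)]
    have hfin : ∑ j : Fin N, (l (j:ℕ) * c (j:ℕ))
        * ((L (j:ℕ)).map (fun p => p.1 * p.2 y)).sum
        = ∑ j ∈ Finset.range N, (l j * c j) * ((L j).map (fun p => p.1 * p.2 y)).sum :=
      Fin.sum_univ_eq_sum_range
        (fun i => (l i * c i) * ((L i).map (fun p => p.1 * p.2 y)).sum) N
    rw [hfin]
    have := hident y
    rw [this]
    have : crem * arem y = grem y := (heqrem y).symm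
    rw [this, hgremdef]
  have hLLcost : (LL.map fun p => |p.1|).sum ≤ (4 * 4^n * K2 n + 1) * h := by
    rw [hLLsum (fun p => |p.1|)]
    have hinner : ∀ j : Fin N, (((L (j:ℕ)).map
        (fun p => ((l (j:ℕ) * c (j:ℕ)) * p.1, p.2))).map (fun p => |p.1|)).sum
        = |l (j:ℕ) * c (j:ℕ)| * ((L (j:ℕ)).map (fun p => |p.1|)).sum :=
      fun j => list_scale_cost (L (j:ℕ)) (l (j:ℕ) * c (j:ℕ))
    rw [Finset.sum_congr rfl (fun j _ => hinner j)]
    have hterm : ∀ j : Fin N, |l (j:ℕ) * c (j:ℕ)| * ((L (j:ℕ)).map (fun p => |p.1|)).sum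
        ≤ |l (j:ℕ)| * (2 * 4^n * K2 n) := by
      intro j
      rw [abs_mul, abs_of_nonneg (hc0 (j:ℕ))]
      calc |l (j:ℕ)| * c (j:ℕ) * ((L (j:ℕ)).map (fun p => |p.1|)).sum
          ≤ |l (j:ℕ)| * c (j:ℕ) * K2 n := by
            apply mul_le_mul_of_nonneg_left (hLcost (j:ℕ))
            exact mul_nonneg (abs_nonneg _) (hc0 _)
        _ ≤ |l (j:ℕ)| * (2 * 4^n) * K2 n := by
            apply mul_le_mul_of_nonneg_right _ hK2.le
            exact mul_le_mul_of_nonneg_left (hcle (j:ℕ)) (abs_nonneg _)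
        _ = |l (j:ℕ)| * (2 * 4^n * K2 n) := by ring
    have hsum1 : ∑ j : Fin N, |l (j:ℕ) * c (j:ℕ)| * ((L (j:ℕ)).map (fun p => |p.1|)).sum
        ≤ ∑ j : Fin N, |l (j:ℕ)| * (2 * 4^n * K2 n) := Finset.sum_le_sum (fun j _ => hterm j)
    have hsum2 : ∑ j : Fin N, |l (j:ℕ)| * (2 * 4^n * K2 n)
        = (∑ j ∈ Finset.range N, |l j|) * (2 * 4^n * K2 n) := by
      rw [← Finset.sum_mul]
      congr 1
      exact Fin.sum_univ_eq_sum_range (fun i => |l i|) N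
    have hsum3 : (∑ j ∈ Finset.range N, |l j|) * (2 * 4^n * K2 n)
        ≤ 2*h * (2 * 4^n * K2 n) := by
      apply mul_le_mul_of_nonneg_right (hlsum' N) (by positivity)
    have habs : |crem| = crem := abs_of_nonneg hcrem0
    calc (∑ j : Fin N, |l (j:ℕ) * c (j:ℕ)| * ((L (j:ℕ)).map (fun p => |p.1|)).sum) + |crem|
        ≤ 2*h * (2 * 4^n * K2 n) + h := by
          rw [habs]
          exact add_le_add (le_trans hsum1 (le_trans hsum2.le hsum3)) hcremh
      _ = (4 * 4^n * K2 n + 1) * h := by ring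
  refine ⟨LL.length, fun i => (LL.get i).1, fun i => (LL.get i).2, ?_, ?_, ?_⟩
  · intro i
    exact hLLmem (LL.get i) (List.get_mem LL i)
  · intro xx
    rw [hLLid xx, list_sum_get LL (fun p => p.1 * p.2 xx)]
  · calc (∑ i : Fin LL.length, |(LL.get i).1|)
        = (LL.map fun p => |p.1|).sum := (list_sum_get LL (fun p => |p.1|)).symm
      _ ≤ (4 * 4^n * K2 n + 1) * h := hLLcost
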